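/- arXiv:1611.10165 — 6 statements merged into one kernel-verified Lean document; each statement's English description precedes it below -/
import Mathlib

section
/- Let 0 ≤ α < β be real numbers and p ∈ ℕ. Then there exists a constant c > 0 depending only on α and β (not on p) such that for every polynomial q of degree at most p, ∫_{-1}^{1} (1-x²)^α q(x)² dx ≤ c (p+1)^{2(β-α)} ∫_{-1}^{1} (1-x²)^β q(x)² dx. -/
open Polynomial MeasureTheory Real



lemma T_natDegree_le : ∀ k : ℕ, (Polynomial.Chebyshev.T ℝ k).natDegree ≤ k := by
  intro k
  induction k using Nat.twoStepInduction with
  | zero => simp [Polynomial.Chebyshev.T_zero]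
  | one => simp [Polynomial.Chebyshev.T_one]
  | more k ih1 ih2 =>
    have h : Polynomial.Chebyshev.T ℝ ((k:ℤ)+2) =
        2 * Polynomial.X * Polynomial.Chebyshev.T ℝ ((k:ℤ)+1) - Polynomial.Chebyshev.T ℝ k :=
      Polynomial.Chebyshev.T_add_two ℝ k
    have hc : ((k+2 : ℕ) : ℤ) = (k:ℤ) + 2 := by push_cast; ring
    rw [hc, h]
    refine le_trans (Polynomial.natDegree_sub_le _ _) ?_
    have h1 : (2 * Polynomial.X * Polynomial.Chebyshev.T ℝ ((k:ℤ)+1)).natDegree ≤ k + 2 := by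
      refine le_trans (Polynomial.natDegree_mul_le) ?_
      have : ((k+1 : ℕ) : ℤ) = (k:ℤ) + 1 := by push_cast; ring
      rw [← this]
      have h2 : (2 * Polynomial.X : ℝ[X]).natDegree ≤ 1 := by
        refine le_trans (Polynomial.natDegree_mul_le) ?_
        simp
      omega
    have h3 : (Polynomial.Chebyshev.T ℝ (k:ℤ)).natDegree ≤ k + 2 := le_trans ih1 (by omega)
    simp [max_le_iff]
    exact h1

lemma T_coeff_top : ∀ k : ℕ, (Polynomial.Chebyshev.T ℝ k).coeff k
    = if k = 0 then 1 else 2^(k-1) := by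
  intro k
  induction k using Nat.twoStepInduction with
  | zero => simp [Polynomial.Chebyshev.T_zero]
  | one => simp [Polynomial.Chebyshev.T_one]
  | more k ih1 ih2 =>
    have h : Polynomial.Chebyshev.T ℝ ((k:ℤ)+2) =
        2 * Polynomial.X * Polynomial.Chebyshev.T ℝ ((k:ℤ)+1) - Polynomial.Chebyshev.T ℝ k :=
      Polynomial.Chebyshev.T_add_two ℝ k
    have hc : ((k+2 : ℕ) : ℤ) = (k:ℤ) + 2 := by push_cast; ring
    rw [hc, h]
    have hcast1 : ((k+1 : ℕ) : ℤ) = (k:ℤ) + 1 := by push_cast; ring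
    have hz : (Polynomial.Chebyshev.T ℝ (k:ℤ)).coeff (k+2) = 0 := by
      apply Polynomial.coeff_eq_zero_of_natDegree_lt
      exact lt_of_le_of_lt (T_natDegree_le k) (by omega)
    have hx : (2 * Polynomial.X * Polynomial.Chebyshev.T ℝ ((k:ℤ)+1)).coeff (k+2)
        = 2 * (Polynomial.Chebyshev.T ℝ ((k:ℤ)+1)).coeff (k+1) := by
      rw [mul_assoc, mul_comm Polynomial.X, ← mul_assoc, Polynomial.coeff_mul_X]
      rw [Polynomial.coeff_ofNat_mul]
    rw [Polynomial.coeff_sub, hx, hz, ← hcast1, ih2]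
    rcases Nat.eq_zero_or_pos k with hk | hk
    · subst hk; norm_num
    · have h1 : k + 1 ≠ 0 := by omega
      have h2 : k + 2 ≠ 0 := by omega
      simp only [h1, h2, if_neg, Nat.add_sub_cancel]
      rw [show k + 2 - 1 = k + 1 from by omega, pow_succ]
      simp
      ring

lemma exists_cheb_rep (p : ℕ) (q : ℝ[X]) (hq : q.natDegree ≤ p) :
    ∃ c : ℕ → ℝ, q = ∑ k ∈ Finset.range (p+1), Polynomial.C (c k) * Polynomial.Chebyshev.T ℝ k := by
  induction p generalizing q with
  | zero =>
    refine ⟨fun _ => q.coeff 0, ?_⟩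
    rw [Polynomial.eq_C_of_natDegree_le_zero hq]
    simp [Polynomial.Chebyshev.T_zero]
  | succ p ih =>
    set a : ℝ := q.coeff (p+1) / 2^p with ha
    set r : ℝ[X] := q - Polynomial.C a * Polynomial.Chebyshev.T ℝ (p+1) with hr
    have hTd : (Polynomial.C a * Polynomial.Chebyshev.T ℝ (p+1)).natDegree ≤ p + 1 := by
      refine le_trans (Polynomial.natDegree_mul_le) ?_
      simpa using T_natDegree_le (p+1)
    have hrd : r.natDegree ≤ p := by
      rw [Polynomial.natDegree_le_iff_coeff_eq_zero]
      intro m hm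
      rcases Nat.lt_or_ge m (p+2) with hm2 | hm2
      · have hm1 : m = p + 1 := by omega
        subst hm1
        rw [hr, Polynomial.coeff_sub, Polynomial.coeff_C_mul,
          show ((p:ℤ)+1) = ((p+1:ℕ):ℤ) by push_cast; ring, T_coeff_top (p+1)]
        simp only [Nat.succ_ne_zero, if_neg, Nat.add_sub_cancel]
        rw [ha]
        field_simp
        simp
      · rw [hr, Polynomial.coeff_sub]
        have h1 : q.coeff m = 0 :=
          Polynomial.coeff_eq_zero_of_natDegree_lt (lt_of_le_of_lt hq (by omega))
        have h2 : (Polynomial.C a * Polynomial.Chebyshev.T ℝ (p+1)).coeff m = 0 :=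
          Polynomial.coeff_eq_zero_of_natDegree_lt (lt_of_le_of_lt hTd (by omega))
        rw [h1, h2]; ring
    obtain ⟨c, hc⟩ := ih r hrd
    refine ⟨fun k => if k = p + 1 then a else c k, ?_⟩
    rw [Finset.sum_range_succ]
    simp only [if_pos]
    have : ∑ k ∈ Finset.range (p+1), Polynomial.C (if k = p + 1 then a else c k) * Polynomial.Chebyshev.T ℝ k
        = ∑ k ∈ Finset.range (p+1), Polynomial.C (c k) * Polynomial.Chebyshev.T ℝ k := by
      apply Finset.sum_congr rfl
      intro k hk
      have : k ≠ p + 1 := by simp at hk; omega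
      simp [this]
    rw [this, ← hc, show (((p+1):ℕ):ℤ) = (p:ℤ)+1 by push_cast; ring, hr]
    ring



lemma cont_rpow {γ : ℝ} (hγ : 0 ≤ γ) : Continuous fun y : ℝ => y ^ γ := by
  rw [continuous_iff_continuousAt]
  intro y
  exact Real.continuousAt_rpow_const y γ (Or.inr hγ)

lemma cont_w {γ : ℝ} (hγ : 0 ≤ γ) : Continuous fun x : ℝ => (1 - x^2) ^ γ :=
  (cont_rpow hγ).comp (by continuity)

lemma integral_cos_int (m : ℤ) (hm : m ≠ 0) :
    ∫ θ in (0:ℝ)..π, Real.cos ((m:ℝ) * θ) = 0 := by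
  have hm' : ((m:ℝ)) ≠ 0 := by exact_mod_cast hm
  rw [intervalIntegral.integral_comp_mul_left (fun x => Real.cos x) hm']
  simp [integral_cos, Real.sin_int_mul_pi]

lemma cos_orth_ne {j k : ℕ} (hjk : j ≠ k) :
    ∫ θ in (0:ℝ)..π, Real.cos (j * θ) * Real.cos (k * θ) = 0 := by
  have hpt : ∀ θ : ℝ, Real.cos (j * θ) * Real.cos (k * θ)
      = (Real.cos ((((j:ℤ)+k : ℤ):ℝ) * θ) + Real.cos ((((j:ℤ)-k : ℤ):ℝ) * θ)) / 2 := by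
    intro θ
    have h1 := Real.cos_add ((j:ℝ)*θ) ((k:ℝ)*θ)
    have h2 := Real.cos_sub ((j:ℝ)*θ) ((k:ℝ)*θ)
    push_cast
    rw [add_mul, sub_mul, h1, h2]
    ring
  simp only [hpt]
  rw [intervalIntegral.integral_div]
  rw [intervalIntegral.integral_add (by apply Continuous.intervalIntegrable; continuity)
    (by apply Continuous.intervalIntegrable; continuity)]
  rw [integral_cos_int ((j:ℤ)+k) (by omega), integral_cos_int ((j:ℤ)-k) (by omega)]
  norm_num

lemma cos_orth_diag (k : ℕ) :
    π/2 ≤ ∫ θ in (0:ℝ)..π, Real.cos (k * θ) * Real.cos (k * θ) := by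
  have hpt : ∀ θ : ℝ, Real.cos (k * θ) * Real.cos (k * θ)
      = 1/2 + Real.cos ((((2*k:ℕ) : ℤ):ℝ) * θ) / 2 := by
    intro θ
    have h := Real.cos_sq ((k:ℝ)*θ)
    push_cast
    rw [two_mul, add_mul]
    rw [show (k:ℝ)*θ + (k:ℝ)*θ = 2*((k:ℝ)*θ) by ring]
    nlinarith [h]
  simp only [hpt]
  rw [intervalIntegral.integral_add (by apply Continuous.intervalIntegrable; continuity)
    (by apply Continuous.intervalIntegrable; continuity)]
  have h1 : (∫ (_x:ℝ) in (0:ℝ)..π, (1:ℝ)) = π := by simp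
  have hV : (0:ℝ) ≤ ∫ θ in (0:ℝ)..π, Real.cos ((((2*k:ℕ) : ℤ):ℝ) * θ) / 2 := by
    rw [intervalIntegral.integral_div]
    rcases Nat.eq_zero_or_pos k with hk | hk
    · subst hk
      norm_num
      linarith [Real.pi_pos]
    · rw [integral_cos_int (2*k : ℕ) (by omega)]
      norm_num
  have h2 : (∫ (_x:ℝ) in (0:ℝ)..π, (1:ℝ)/2) = π/2 := by
    simp [h1]
    linarith [h1]
  rw [h2]
  linarith [hV]

lemma subst_cos (g : ℝ → ℝ) (hg : Continuous g) :
    ∫ θ in (0:ℝ)..π, Real.sin θ * g (Real.cos θ) = ∫ x in (-1:ℝ)..1, g x := by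
  have h : ∀ θ ∈ Set.uIcc (0:ℝ) π, HasDerivAt Real.cos (-Real.sin θ) θ :=
    fun θ _ => Real.hasDerivAt_cos θ
  have h' : ContinuousOn (fun θ : ℝ => -Real.sin θ) (Set.uIcc 0 π) :=
    (Real.continuous_sin.neg).continuousOn
  have key := intervalIntegral.integral_comp_smul_deriv h h' hg
  simp only [smul_eq_mul, Function.comp_apply, Real.cos_zero, Real.cos_pi] at key
  have e1 : ∫ θ in (0:ℝ)..π, -Real.sin θ * g (Real.cos θ)
      = -∫ θ in (0:ℝ)..π, Real.sin θ * g (Real.cos θ) := by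
    rw [← intervalIntegral.integral_neg]
    congr 1
    funext θ
    ring
  have e2 : ∫ x in (1:ℝ)..(-1), g x = -∫ x in (-1:ℝ)..1, g x :=
    intervalIntegral.integral_symm _ _
  rw [e1, e2] at key
  linarith



lemma pt_bound (p : ℕ) (q : ℝ[X]) (hq : q.natDegree ≤ p) (θ : ℝ) :
    (q.eval (Real.cos θ))^2
      ≤ (2*((p:ℝ)+1)/π) * ∫ t in (0:ℝ)..π, (q.eval (Real.cos t))^2 := by
  have hπ := Real.pi_pos
  obtain ⟨c, hc⟩ := exists_cheb_rep p q hq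
  set n := p + 1 with hn
  have hf : ∀ t : ℝ, q.eval (Real.cos t) = ∑ k ∈ Finset.range n, c k * Real.cos (k * t) := by
    intro t
    rw [hc, Polynomial.eval_finset_sum]
    apply Finset.sum_congr rfl
    intro k _
    rw [Polynomial.eval_mul, Polynomial.eval_C, Polynomial.Chebyshev.T_real_cos]
    norm_num
  set S : ℝ := ∫ t in (0:ℝ)..π, (q.eval (Real.cos t))^2 with hSdef
  have hcosc : ∀ m : ℕ, Continuous fun t : ℝ => Real.cos ((m:ℝ)*t) :=
    fun m => Real.continuous_cos.comp (continuous_const.mul continuous_id)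
  have hint : ∀ j k : ℕ, IntervalIntegrable
      (fun t => (c j * c k) * (Real.cos (j*t) * Real.cos (k*t))) volume 0 π := by
    intro j k
    exact (continuous_const.mul ((hcosc j).mul (hcosc k))).intervalIntegrable _ _
  have hexp : S = ∑ j ∈ Finset.range n, ∑ k ∈ Finset.range n,
      (c j * c k) * ∫ t in (0:ℝ)..π, Real.cos (j*t) * Real.cos (k*t) := by
    rw [hSdef]
    have hpt2 : ∀ t : ℝ, (q.eval (Real.cos t))^2 = ∑ j ∈ Finset.range n, ∑ k ∈ Finset.range n,
        (c j * c k) * (Real.cos (j*t) * Real.cos (k*t)) := by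
      intro t
      rw [hf t, sq, Finset.sum_mul_sum]
      apply Finset.sum_congr rfl
      intro j _
      apply Finset.sum_congr rfl
      intro k _
      ring
    simp only [hpt2]
    rw [intervalIntegral.integral_finset_sum]
    · apply Finset.sum_congr rfl
      intro j _
      rw [intervalIntegral.integral_finset_sum]
      · apply Finset.sum_congr rfl
        intro k _
        exact intervalIntegral.integral_const_mul _ _
      · intro k _
        exact hint j k
    · intro j _
      apply Continuous.intervalIntegrable
      apply continuous_finset_sum
      intro k _
      exact continuous_const.mul ((hcosc j).mul (hcosc k))
  have hdiag : S = ∑ k ∈ Finset.range n, (c k)^2 *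
      ∫ t in (0:ℝ)..π, Real.cos (k*t) * Real.cos (k*t) := by
    rw [hexp]
    apply Finset.sum_congr rfl
    intro j hj
    rw [Finset.sum_eq_single j]
    · rw [← sq]
    · intro k _ hkj
      rw [cos_orth_ne (Ne.symm hkj)]
      ring
    · intro hj'
      exact absurd hj hj'
  have hlow : (π/2) * ∑ k ∈ Finset.range n, (c k)^2 ≤ S := by
    rw [hdiag, Finset.mul_sum]
    apply Finset.sum_le_sum
    intro k _
    have h1 := cos_orth_diag k
    have h2 : (0:ℝ) ≤ (c k)^2 := sq_nonneg _
    nlinarith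
  have hS0 : (0:ℝ) ≤ S := by
    rw [hSdef]
    apply intervalIntegral.integral_nonneg hπ.le
    intro t _
    exact sq_nonneg _
  have habs : |q.eval (Real.cos θ)| ≤ ∑ k ∈ Finset.range n, |c k| := by
    rw [hf θ]
    refine le_trans (Finset.abs_sum_le_sum_abs _ _) ?_
    apply Finset.sum_le_sum
    intro k _
    rw [abs_mul]
    have h1 := Real.abs_cos_le_one ((k:ℝ)*θ)
    nlinarith [abs_nonneg (c k), abs_nonneg (Real.cos ((k:ℝ)*θ))]
  have hsq : (q.eval (Real.cos θ))^2 ≤ (n:ℝ) * ∑ k ∈ Finset.range n, (c k)^2 := by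
    have h1 : (q.eval (Real.cos θ))^2 ≤ (∑ k ∈ Finset.range n, |c k|)^2 := by
      rw [← sq_abs]
      exact pow_le_pow_left₀ (abs_nonneg _) habs 2
    refine le_trans h1 ?_
    have h2 := sq_sum_le_card_mul_sum_sq (s := Finset.range n) (f := fun k => |c k|)
    simpa [sq_abs, Finset.card_range] using h2
  have hSig : ∑ k ∈ Finset.range n, (c k)^2 ≤ (2/π) * S := by
    rw [div_mul_eq_mul_div, le_div_iff₀ hπ]
    nlinarith [hlow]
  calc (q.eval (Real.cos θ))^2 ≤ (n:ℝ) * ∑ k ∈ Finset.range n, (c k)^2 := hsq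
    _ ≤ (n:ℝ) * ((2/π) * S) := by
        apply mul_le_mul_of_nonneg_left hSig
        positivity
    _ = (2*((p:ℝ)+1)/π) * S := by
        rw [hn]
        push_cast
        ring



set_option maxHeartbeats 1000000 in
lemma absorption (β : ℝ) (hβ : 0 < β) (p : ℕ) (q : ℝ[X]) (hq : q.natDegree ≤ p) :
    (∫ t in (0:ℝ)..π, (q.eval (Real.cos t))^2)
      ≤ 2 * (6*((p:ℝ)+1))^(2*β+1) * ∫ x in (-1:ℝ)..1, (1 - x^2)^β * (q.eval x)^2 := by
  have hπ := Real.pi_pos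
  have hπ3 := Real.pi_gt_three
  have hπ4 := Real.pi_le_four
  obtain ⟨N, hN⟩ : ∃ N : ℝ, N = (p:ℝ)+1 := ⟨_, rfl⟩
  rw [← hN]
  have hN1 : (1:ℝ) ≤ N := by
    rw [hN]
    have : (0:ℝ) ≤ (p:ℝ) := Nat.cast_nonneg p
    linarith
  have hN0 : (0:ℝ) < N := lt_of_lt_of_le one_pos hN1
  obtain ⟨θ₀, hθ₀⟩ : ∃ θ₀ : ℝ, θ₀ = 1/(3*N) := ⟨_, rfl⟩
  have h00 : 0 < θ₀ := by rw [hθ₀]; positivity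
  have hθN : θ₀ * N = 1/3 := by
    rw [hθ₀]
    field_simp
  have h013 : θ₀ ≤ 1/3 := by
    rw [hθ₀]
    rw [div_le_div_iff₀ (by linarith) (by norm_num)]
    linarith
  have hhalf : θ₀ ≤ π/2 := by linarith
  have hord : θ₀ ≤ π - θ₀ := by linarith
  have hfc : Continuous fun t : ℝ => (q.eval (Real.cos t))^2 :=
    ((q.continuous).comp Real.continuous_cos).pow 2
  have hfi : ∀ a b : ℝ, IntervalIntegrable (fun t => (q.eval (Real.cos t))^2) volume a b :=
    fun a b => hfc.intervalIntegrable a b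
  obtain ⟨S, hS⟩ : ∃ S : ℝ, S = ∫ t in (0:ℝ)..π, (q.eval (Real.cos t))^2 := ⟨_, rfl⟩
  rw [← hS]
  have hS0 : 0 ≤ S := by
    rw [hS]
    exact intervalIntegral.integral_nonneg hπ.le (fun t _ => sq_nonneg _)
  obtain ⟨E1, hE1⟩ : ∃ E1 : ℝ, E1 = ∫ t in (0:ℝ)..θ₀, (q.eval (Real.cos t))^2 := ⟨_, rfl⟩
  obtain ⟨M, hM⟩ : ∃ M : ℝ, M = ∫ t in θ₀..(π-θ₀), (q.eval (Real.cos t))^2 := ⟨_, rfl⟩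
  obtain ⟨E2, hE2⟩ : ∃ E2 : ℝ, E2 = ∫ t in (π-θ₀)..π, (q.eval (Real.cos t))^2 := ⟨_, rfl⟩
  have hsplit : E1 + M + E2 = S := by
    rw [hE1, hM, hE2, hS]
    rw [intervalIntegral.integral_add_adjacent_intervals (hfi _ _) (hfi _ _)]
    rw [intervalIntegral.integral_add_adjacent_intervals (hfi _ _) (hfi _ _)]
  have hptc : ∀ t : ℝ, (q.eval (Real.cos t))^2 ≤ (2*N/π) * S := by
    intro t
    rw [hN, hS]
    exact pt_bound p q hq t
  have hCnn : 0 ≤ (2*N/π) * S := by positivity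
  have hE1b : E1 ≤ θ₀ * ((2*N/π) * S) := by
    rw [hE1]
    calc (∫ t in (0:ℝ)..θ₀, (q.eval (Real.cos t))^2)
        ≤ ∫ _t in (0:ℝ)..θ₀, (2*N/π) * S := by
          apply intervalIntegral.integral_mono_on h00.le (hfi _ _)
            (intervalIntegrable_const) (fun t _ => hptc t)
      _ = θ₀ * ((2*N/π) * S) := by
          rw [intervalIntegral.integral_const, sub_zero, smul_eq_mul]
  have hE2b : E2 ≤ θ₀ * ((2*N/π) * S) := by
    rw [hE2]
    calc (∫ t in (π-θ₀)..π, (q.eval (Real.cos t))^2)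
        ≤ ∫ _t in (π-θ₀)..π, (2*N/π) * S := by
          apply intervalIntegral.integral_mono_on (by linarith) (hfi _ _)
            (intervalIntegrable_const) (fun t _ => hptc t)
      _ = θ₀ * ((2*N/π) * S) := by
          rw [intervalIntegral.integral_const, show π - (π - θ₀) = θ₀ by ring, smul_eq_mul]
  have hsin0 : θ₀/2 ≤ Real.sin θ₀ := by
    have h := Real.mul_le_sin h00.le hhalf
    have h2 : θ₀/2 ≤ 2/π * θ₀ := by
      rw [div_mul_eq_mul_div, le_div_iff₀ hπ]
      nlinarith
    linarith
  have hsinpos : 0 < Real.sin θ₀ := by linarith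
  have hsinmono : ∀ t ∈ Set.Icc θ₀ (π-θ₀), Real.sin θ₀ ≤ Real.sin t := by
    intro t ht
    rcases le_or_gt t (π/2) with h | h
    · exact Real.strictMonoOn_sin.monotoneOn ⟨by linarith, hhalf⟩ ⟨by linarith [ht.1], h⟩ ht.1
    · rw [← Real.sin_pi_sub t]
      exact Real.strictMonoOn_sin.monotoneOn ⟨by linarith, hhalf⟩
        ⟨by linarith [ht.2], by linarith [h]⟩ (by linarith [ht.2])
  obtain ⟨g, hg⟩ : ∃ g : ℝ → ℝ, g = fun x => (1 - x^2)^β * (q.eval x)^2 := ⟨_, rfl⟩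
  have hgc : Continuous g := by
    rw [hg]
    exact (cont_w hβ.le).mul ((q.continuous).pow 2)
  obtain ⟨Iβ, hIb⟩ : ∃ I : ℝ, I = ∫ x in (-1:ℝ)..1, (1 - x^2)^β * (q.eval x)^2 := ⟨_, rfl⟩
  rw [← hIb]
  have hIβeq : ∫ t in (0:ℝ)..π, (q.eval (Real.cos t))^2 * (Real.sin t)^(2*β+1) = Iβ := by
    have hsubst := subst_cos g hgc
    simp only [hg] at hsubst
    rw [hIb, ← hsubst]
    apply intervalIntegral.integral_congr
    intro t ht
    rw [Set.uIcc_of_le hπ.le] at ht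
    have hsint : 0 ≤ Real.sin t := Real.sin_nonneg_of_nonneg_of_le_pi ht.1 ht.2
    have h1 : 1 - (Real.cos t)^2 = (Real.sin t)^2 := by
      have := Real.sin_sq_add_cos_sq t
      linarith
    show (q.eval (Real.cos t))^2 * (Real.sin t)^(2*β+1)
        = Real.sin t * ((1 - (Real.cos t)^2)^β * (q.eval (Real.cos t))^2)
    rw [h1]
    have h2 : ((Real.sin t)^2 : ℝ)^β = (Real.sin t)^(2*β) := by
      rw [← Real.rpow_natCast (Real.sin t) 2, ← Real.rpow_mul hsint]
      norm_num
    rw [h2]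
    have h3 : (Real.sin t)^(2*β+1) = (Real.sin t)^(2*β) * Real.sin t := by
      rw [Real.rpow_add' hsint (by positivity), Real.rpow_one]
    rw [h3]
    ring
  have hintw : ∀ a b : ℝ, IntervalIntegrable
      (fun t => (q.eval (Real.cos t))^2 * (Real.sin t)^(2*β+1)) volume a b := by
    intro a b
    apply Continuous.intervalIntegrable
    exact hfc.mul ((cont_rpow (by positivity)).comp Real.continuous_sin)
  obtain ⟨t₀, ht₀⟩ : ∃ t : ℝ, t = (Real.sin θ₀)^(2*β+1) := ⟨_, rfl⟩
  have ht₀pos : 0 < t₀ := by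
    rw [ht₀]
    exact Real.rpow_pos_of_pos hsinpos _
  have hmid : t₀ * M ≤ Iβ := by
    have step1 : t₀ * M ≤ ∫ t in θ₀..(π-θ₀), (q.eval (Real.cos t))^2 * (Real.sin t)^(2*β+1) := by
      rw [hM, ← intervalIntegral.integral_const_mul]
      apply intervalIntegral.integral_mono_on hord
        ((continuous_const.mul hfc).intervalIntegrable _ _) (hintw _ _)
      intro t ht
      have h1 : Real.sin θ₀ ≤ Real.sin t := hsinmono t ht
      have h2 : t₀ ≤ (Real.sin t)^(2*β+1) := by
        rw [ht₀]
        exact Real.rpow_le_rpow hsinpos.le h1 (by positivity)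
      have h3 : 0 ≤ (q.eval (Real.cos t))^2 := sq_nonneg _
      calc t₀ * (q.eval (Real.cos t))^2 ≤ (Real.sin t)^(2*β+1) * (q.eval (Real.cos t))^2 :=
            mul_le_mul_of_nonneg_right h2 h3
        _ = (q.eval (Real.cos t))^2 * (Real.sin t)^(2*β+1) := by ring
    have step2 : (∫ t in θ₀..(π-θ₀), (q.eval (Real.cos t))^2 * (Real.sin t)^(2*β+1))
        ≤ ∫ t in (0:ℝ)..π, (q.eval (Real.cos t))^2 * (Real.sin t)^(2*β+1) := by
      have hnn : ∀ (a b : ℝ), 0 ≤ a → a ≤ b → b ≤ π →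
          0 ≤ ∫ t in a..b, (q.eval (Real.cos t))^2 * (Real.sin t)^(2*β+1) := by
        intro a b ha hab hb
        apply intervalIntegral.integral_nonneg hab
        intro u hu
        have hs : 0 ≤ Real.sin u :=
          Real.sin_nonneg_of_nonneg_of_le_pi (le_trans ha hu.1) (le_trans hu.2 hb)
        exact mul_nonneg (sq_nonneg _) (Real.rpow_nonneg hs _)
      have e1 := intervalIntegral.integral_add_adjacent_intervals (hintw 0 θ₀) (hintw θ₀ π)
      have e2 := intervalIntegral.integral_add_adjacent_intervals (hintw θ₀ (π-θ₀)) (hintw (π-θ₀) π)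
      have n1 := hnn 0 θ₀ le_rfl h00.le (by linarith)
      have n2 := hnn (π-θ₀) π (by linarith) (by linarith) le_rfl
      linarith
    rw [← hIβeq]
    linarith
  -- combine
  have habs : S ≤ S/2 + Iβ/t₀ := by
    have h1 : 2*θ₀*((2*N/π)*S) ≤ S/2 := by
      have e : 2*θ₀*((2*N/π)*S) = (4*(θ₀*N))*(S/π) := by ring
      rw [e, hθN]
      rw [show (4:ℝ)*(1/3)*(S/π) = (4/3)*S/π by ring]
      rw [div_le_iff₀ hπ]
      nlinarith
    have h2 : M ≤ Iβ/t₀ := by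
      rw [le_div_iff₀ ht₀pos]
      nlinarith [hmid]
    linarith
  have hfin : S ≤ 2 * Iβ / t₀ := by
    have h1 : S/2 ≤ Iβ/t₀ := by linarith
    calc S = 2*(S/2) := by ring
      _ ≤ 2*(Iβ/t₀) := by linarith
      _ = 2 * Iβ / t₀ := by ring
  have hIβ0 : 0 ≤ Iβ := by
    rw [hIb]
    apply intervalIntegral.integral_nonneg (by norm_num : (-1:ℝ) ≤ 1)
    intro u hu
    have h1 : (0:ℝ) ≤ 1 - u^2 := by nlinarith [hu.1, hu.2]
    exact mul_nonneg (Real.rpow_nonneg h1 _) (sq_nonneg _)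
  have h6 : (1:ℝ) ≤ 6*N*Real.sin θ₀ := by
    have hm := mul_le_mul_of_nonneg_left hsin0 (by positivity : (0:ℝ) ≤ 6*N)
    nlinarith [hm, hθN]
  have hinvt : 1/t₀ ≤ (6*N)^(2*β+1) := by
    have hprod : (1:ℝ) ≤ (6*N)^(2*β+1) * t₀ := by
      rw [ht₀, ← Real.mul_rpow (by positivity) hsinpos.le]
      calc (1:ℝ) = 1 ^ (2*β+1) := (Real.one_rpow _).symm
        _ ≤ (6*N*Real.sin θ₀)^(2*β+1) := Real.rpow_le_rpow (by norm_num) h6 (by positivity)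
    rw [div_le_iff₀ ht₀pos]
    linarith
  calc S ≤ 2 * Iβ / t₀ := hfin
    _ = 2 * Iβ * (1/t₀) := by ring
    _ ≤ 2 * Iβ * ((6*N)^(2*β+1)) := by
        apply mul_le_mul_of_nonneg_left hinvt (by positivity)
    _ = 2 * (6*N)^(2*β+1) * Iβ := by ring



lemma nikolskii (β : ℝ) (hβ : 0 < β) (p : ℕ) (q : ℝ[X]) (hq : q.natDegree ≤ p)
    (x : ℝ) (hx1 : -1 ≤ x) (hx2 : x ≤ 1) :
    (q.eval x)^2 ≤ (4/π) * 6^(2*β+1) * ((p:ℝ)+1)^(2*β+2)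
      * ∫ t in (-1:ℝ)..1, (1 - t^2)^β * (q.eval t)^2 := by
  have hπ := Real.pi_pos
  obtain ⟨N, hNd⟩ : ∃ N : ℝ, N = (p:ℝ)+1 := ⟨_, rfl⟩
  rw [← hNd]
  have hN0 : (0:ℝ) < N := by rw [hNd]; positivity
  obtain ⟨Iβ, hIb⟩ : ∃ I : ℝ, I = ∫ t in (-1:ℝ)..1, (1 - t^2)^β * (q.eval t)^2 := ⟨_, rfl⟩
  rw [← hIb]
  obtain ⟨S, hS⟩ : ∃ S : ℝ, S = ∫ t in (0:ℝ)..π, (q.eval (Real.cos t))^2 := ⟨_, rfl⟩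
  have h1 : (q.eval x)^2 ≤ (2*N/π) * S := by
    rw [← Real.cos_arccos hx1 hx2, hS, hNd]
    exact pt_bound p q hq (Real.arccos x)
  have h2 : S ≤ 2 * (6*N)^(2*β+1) * Iβ := by
    rw [hS, hIb, hNd]
    exact absorption β hβ p q hq
  have h3 : (q.eval x)^2 ≤ (2*N/π) * (2 * (6*N)^(2*β+1) * Iβ) := by
    refine le_trans h1 ?_
    apply mul_le_mul_of_nonneg_left h2 (by positivity)
  refine le_trans h3 (le_of_eq ?_)
  have e1 : (6*N)^(2*β+1) = 6^(2*β+1) * N^(2*β+1) :=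
    Real.mul_rpow (by norm_num) hN0.le
  have e2 : N^(2*β+2) = N * N^(2*β+1) := by
    rw [show 2*β+2 = 1+(2*β+1) by ring, Real.rpow_add hN0, Real.rpow_one]
  rw [e1, e2]
  ring



set_option maxHeartbeats 1000000 in
theorem stmt_0 (α β : ℝ) (hα : 0 ≤ α) (hαβ : α < β) :
    ∃ c > 0, ∀ (p : ℕ) (q : Polynomial ℝ), q.natDegree ≤ p →
      ∫ x in (-1:ℝ)..1, (1 - x^2)^α * (q.eval x)^2
        ≤ c * ((p : ℝ) + 1)^(2*(β - α)) * ∫ x in (-1:ℝ)..1, (1 - x^2)^β * (q.eval x)^2 := by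
  have hπ := Real.pi_pos
  have hβ : 0 < β := lt_of_le_of_lt hα hαβ
  obtain ⟨K, hK⟩ : ∃ K : ℝ, K = (4/π) * 6^(2*β+1) := ⟨_, rfl⟩
  have h6pos : (0:ℝ) < 6^(2*β+1) := Real.rpow_pos_of_pos (by norm_num) _
  have hK0 : 0 < K := by rw [hK]; positivity
  have h2a : (0:ℝ) < 2^(α+1) := Real.rpow_pos_of_pos (by norm_num) _
  refine ⟨1 + 2^(α+1) * K, by positivity, ?_⟩
  intro p q hq
  obtain ⟨N, hNd⟩ : ∃ N : ℝ, N = (p:ℝ)+1 := ⟨_, rfl⟩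
  rw [← hNd]
  have hN1 : (1:ℝ) ≤ N := by
    rw [hNd]
    have : (0:ℝ) ≤ (p:ℝ) := Nat.cast_nonneg p
    linarith
  have hN0 : (0:ℝ) < N := by linarith
  obtain ⟨Iβ, hIb⟩ : ∃ I : ℝ, I = ∫ x in (-1:ℝ)..1, (1 - x^2)^β * (q.eval x)^2 := ⟨_, rfl⟩
  rw [← hIb]
  obtain ⟨δ, hδ⟩ : ∃ d : ℝ, d = N^((-2):ℝ) := ⟨_, rfl⟩
  have hδpos : 0 < δ := by rw [hδ]; exact Real.rpow_pos_of_pos hN0 _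
  have hδ1 : δ ≤ 1 := by
    rw [hδ]
    calc N^((-2):ℝ) ≤ N^(0:ℝ) := Real.rpow_le_rpow_of_exponent_le hN1 (by norm_num)
      _ = 1 := Real.rpow_zero N
  have hcont : ∀ γ : ℝ, 0 ≤ γ → Continuous fun x : ℝ => (1-x^2)^γ * (q.eval x)^2 :=
    fun γ hγ => (cont_w hγ).mul (q.continuous.pow 2)
  have hi : ∀ (γ : ℝ), 0 ≤ γ → ∀ a b : ℝ,
      IntervalIntegrable (fun x => (1-x^2)^γ * (q.eval x)^2) volume a b :=
    fun γ hγ a b => (hcont γ hγ).intervalIntegrable a b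
  have hIβ0 : 0 ≤ Iβ := by
    rw [hIb]
    apply intervalIntegral.integral_nonneg (by norm_num : (-1:ℝ) ≤ 1)
    intro u hu
    have h1 : (0:ℝ) ≤ 1 - u^2 := by nlinarith [hu.1, hu.2]
    exact mul_nonneg (Real.rpow_nonneg h1 _) (sq_nonneg _)
  obtain ⟨P, hP⟩ : ∃ P : ℝ, P = K * N^(2*β+2) * Iβ := ⟨_, rfl⟩
  have hNpow0 : (0:ℝ) < N^(2*β+2) := Real.rpow_pos_of_pos hN0 _
  have hP0 : 0 ≤ P := by
    rw [hP]
    exact mul_nonneg (mul_nonneg hK0.le hNpow0.le) hIβ0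
  have hNik : ∀ x : ℝ, -1 ≤ x → x ≤ 1 → (q.eval x)^2 ≤ P := by
    intro x h1 h2
    rw [hP, hK, hIb, hNd]
    exact nikolskii β hβ p q hq x h1 h2
  have hord1 : (-1:ℝ) ≤ -1 + δ := by linarith
  have hord2 : -1 + δ ≤ 1 - δ := by linarith
  have hord3 : (1:ℝ) - δ ≤ 1 := by linarith
  have hsplit : (∫ x in (-1:ℝ)..1, (1-x^2)^α * (q.eval x)^2)
      = (∫ x in (-1:ℝ)..(-1+δ), (1-x^2)^α * (q.eval x)^2)
        + (∫ x in (-1+δ:ℝ)..(1-δ), (1-x^2)^α * (q.eval x)^2)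
        + (∫ x in (1-δ:ℝ)..1, (1-x^2)^α * (q.eval x)^2) := by
    rw [intervalIntegral.integral_add_adjacent_intervals (hi α hα _ _) (hi α hα _ _),
        intervalIntegral.integral_add_adjacent_intervals (hi α hα _ _) (hi α hα _ _)]
  -- middle part
  have hmid : (∫ x in (-1+δ:ℝ)..(1-δ), (1-x^2)^α * (q.eval x)^2) ≤ δ^(α-β) * Iβ := by
    have hδab0 : 0 ≤ δ^(α-β) := (Real.rpow_pos_of_pos hδpos _).le
    have step1 : (∫ x in (-1+δ:ℝ)..(1-δ), (1-x^2)^α * (q.eval x)^2)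
        ≤ ∫ x in (-1+δ:ℝ)..(1-δ), δ^(α-β) * ((1-x^2)^β * (q.eval x)^2) := by
      apply intervalIntegral.integral_mono_on hord2 (hi α hα _ _)
        ((continuous_const.mul (hcont β hβ.le)).intervalIntegrable _ _)
      intro x hx
      have hxd : δ ≤ 1 - x^2 := by nlinarith [hx.1, hx.2, hδpos, hδ1]
      have hb0 : 0 < 1 - x^2 := lt_of_lt_of_le hδpos hxd
      have e : (1-x^2)^α = (1-x^2)^(α-β) * (1-x^2)^β := by
        rw [← Real.rpow_add hb0]
        congr 1
        ring
      have h2 : (1-x^2)^(α-β) ≤ δ^(α-β) :=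
        Real.rpow_le_rpow_of_nonpos hδpos hxd (by linarith)
      have h3 : (0:ℝ) ≤ (1-x^2)^β * (q.eval x)^2 :=
        mul_nonneg (Real.rpow_nonneg hb0.le _) (sq_nonneg _)
      calc (1-x^2)^α * (q.eval x)^2 = (1-x^2)^(α-β) * ((1-x^2)^β * (q.eval x)^2) := by
            rw [e]; ring
        _ ≤ δ^(α-β) * ((1-x^2)^β * (q.eval x)^2) := mul_le_mul_of_nonneg_right h2 h3
    have step2 : (∫ x in (-1+δ:ℝ)..(1-δ), δ^(α-β) * ((1-x^2)^β * (q.eval x)^2))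
        = δ^(α-β) * ∫ x in (-1+δ:ℝ)..(1-δ), (1-x^2)^β * (q.eval x)^2 :=
      intervalIntegral.integral_const_mul _ _
    have step3 : (∫ x in (-1+δ:ℝ)..(1-δ), (1-x^2)^β * (q.eval x)^2) ≤ Iβ := by
      have e1 := intervalIntegral.integral_add_adjacent_intervals
        (hi β hβ.le (-1) (-1+δ)) (hi β hβ.le (-1+δ) 1)
      have e2 := intervalIntegral.integral_add_adjacent_intervals
        (hi β hβ.le (-1+δ) (1-δ)) (hi β hβ.le (1-δ) 1)
      have hnn : ∀ a b : ℝ, -1 ≤ a → a ≤ b → b ≤ 1 →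
          0 ≤ ∫ x in a..b, (1-x^2)^β * (q.eval x)^2 := by
        intro a b ha hab hb
        apply intervalIntegral.integral_nonneg hab
        intro u hu
        have h1 : (0:ℝ) ≤ 1 - u^2 := by nlinarith [hu.1, hu.2, ha, hb]
        exact mul_nonneg (Real.rpow_nonneg h1 _) (sq_nonneg _)
      have n1 := hnn (-1) (-1+δ) le_rfl hord1 (by linarith)
      have n2 := hnn (1-δ) 1 (by linarith) hord3 le_rfl
      rw [hIb]
      linarith
    calc (∫ x in (-1+δ:ℝ)..(1-δ), (1-x^2)^α * (q.eval x)^2)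
        ≤ δ^(α-β) * ∫ x in (-1+δ:ℝ)..(1-δ), (1-x^2)^β * (q.eval x)^2 := by
          rw [← step2]; exact step1
      _ ≤ δ^(α-β) * Iβ := mul_le_mul_of_nonneg_left step3 hδab0
  -- endpoint weight integral
  have hend_w : (∫ x in (1-δ:ℝ)..1, (1-x^2)^α) ≤ 2^α * δ^(α+1) := by
    have h2apos : (0:ℝ) < 2^α := Real.rpow_pos_of_pos (by norm_num) _
    have step1 : (∫ x in (1-δ:ℝ)..1, (1-x^2)^α) ≤ ∫ x in (1-δ:ℝ)..1, 2^α * (1-x)^α := by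
      apply intervalIntegral.integral_mono_on hord3
        ((cont_w hα).intervalIntegrable _ _)
        ((continuous_const.mul ((cont_rpow hα).comp (continuous_const.sub continuous_id))).intervalIntegrable _ _)
      intro x hx
      have h1 : (0:ℝ) ≤ 1 - x^2 := by nlinarith [hx.1, hx.2, hδ1]
      have h2 : 1 - x^2 ≤ 2*(1-x) := by nlinarith [hx.1, hx.2, hδ1]
      calc (1-x^2)^α ≤ (2*(1-x))^α := Real.rpow_le_rpow h1 h2 hα
        _ = 2^α * (1-x)^α := Real.mul_rpow (by norm_num) (by nlinarith [hx.2])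
    have step2 : (∫ x in (1-δ:ℝ)..1, 2^α * (1-x)^α)
        = 2^α * ∫ x in (1-δ:ℝ)..1, (1-x)^α := intervalIntegral.integral_const_mul _ _
    have step3 : (∫ x in (1-δ:ℝ)..1, (1-x)^α) = ∫ u in (0:ℝ)..δ, u^α := by
      have := intervalIntegral.integral_comp_sub_left (a := 1-δ) (b := 1)
        (fun u : ℝ => u^α) 1
      rw [this]
      norm_num
    have step4 : (∫ u in (0:ℝ)..δ, u^α) = δ^(α+1)/(α+1) := by
      rw [integral_rpow (Or.inl (by linarith : (-1:ℝ) < α))]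
      rw [Real.zero_rpow (by positivity : α+1 ≠ 0)]
      ring
    have step5 : δ^(α+1)/(α+1) ≤ δ^(α+1) := by
      apply div_le_self (Real.rpow_nonneg hδpos.le _)
      linarith
    calc (∫ x in (1-δ:ℝ)..1, (1-x^2)^α) ≤ 2^α * ∫ x in (1-δ:ℝ)..1, (1-x)^α := by
          rw [← step2]; exact step1
      _ = 2^α * (δ^(α+1)/(α+1)) := by rw [step3, step4]
      _ ≤ 2^α * δ^(α+1) := mul_le_mul_of_nonneg_left step5 h2apos.le
  -- flip for the left end
  have hflip : (∫ x in (-1:ℝ)..(-1+δ), (1-x^2)^α) = ∫ x in (1-δ:ℝ)..1, (1-x^2)^α := by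
    have h := intervalIntegral.integral_comp_neg (a := 1-δ) (b := 1)
      (fun x : ℝ => (1-x^2)^α)
    simp only [neg_sq] at h
    rw [show -(1:ℝ) = -1 by ring] at h
    rw [show -((1:ℝ)-δ) = -1+δ by ring] at h
    rw [← h]
  -- right end bound
  have hendR : (∫ x in (1-δ:ℝ)..1, (1-x^2)^α * (q.eval x)^2) ≤ P * (2^α * δ^(α+1)) := by
    have step1 : (∫ x in (1-δ:ℝ)..1, (1-x^2)^α * (q.eval x)^2)
        ≤ ∫ x in (1-δ:ℝ)..1, (1-x^2)^α * P := by
      apply intervalIntegral.integral_mono_on hord3 (hi α hα _ _)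
        (((cont_w hα).mul continuous_const).intervalIntegrable _ _)
      intro x hx
      have h1 : (0:ℝ) ≤ 1 - x^2 := by nlinarith [hx.1, hx.2, hδ1]
      exact mul_le_mul_of_nonneg_left (hNik x (by nlinarith [hx.1, hδ1]) hx.2)
        (Real.rpow_nonneg h1 _)
    have step2 : (∫ x in (1-δ:ℝ)..1, (1-x^2)^α * P)
        = (∫ x in (1-δ:ℝ)..1, (1-x^2)^α) * P := intervalIntegral.integral_mul_const _ _
    calc (∫ x in (1-δ:ℝ)..1, (1-x^2)^α * (q.eval x)^2)
        ≤ (∫ x in (1-δ:ℝ)..1, (1-x^2)^α) * P := by rw [← step2]; exact step1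
      _ ≤ (2^α * δ^(α+1)) * P := mul_le_mul_of_nonneg_right hend_w hP0
      _ = P * (2^α * δ^(α+1)) := by ring
  -- left end bound
  have hendL : (∫ x in (-1:ℝ)..(-1+δ), (1-x^2)^α * (q.eval x)^2) ≤ P * (2^α * δ^(α+1)) := by
    have step1 : (∫ x in (-1:ℝ)..(-1+δ), (1-x^2)^α * (q.eval x)^2)
        ≤ ∫ x in (-1:ℝ)..(-1+δ), (1-x^2)^α * P := by
      apply intervalIntegral.integral_mono_on hord1 (hi α hα _ _)
        (((cont_w hα).mul continuous_const).intervalIntegrable _ _)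
      intro x hx
      have h1 : (0:ℝ) ≤ 1 - x^2 := by nlinarith [hx.1, hx.2, hδ1]
      exact mul_le_mul_of_nonneg_left (hNik x hx.1 (by nlinarith [hx.2, hδ1]))
        (Real.rpow_nonneg h1 _)
    have step2 : (∫ x in (-1:ℝ)..(-1+δ), (1-x^2)^α * P)
        = (∫ x in (-1:ℝ)..(-1+δ), (1-x^2)^α) * P := intervalIntegral.integral_mul_const _ _
    calc (∫ x in (-1:ℝ)..(-1+δ), (1-x^2)^α * (q.eval x)^2)
        ≤ (∫ x in (-1:ℝ)..(-1+δ), (1-x^2)^α) * P := by rw [← step2]; exact step1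
      _ = (∫ x in (1-δ:ℝ)..1, (1-x^2)^α) * P := by rw [hflip]
      _ ≤ (2^α * δ^(α+1)) * P := mul_le_mul_of_nonneg_right hend_w hP0
      _ = P * (2^α * δ^(α+1)) := by ring
  -- rpow algebra
  have eδ1 : δ^(α-β) = N^(2*(β-α)) := by
    rw [hδ, ← Real.rpow_mul hN0.le]
    congr 1
    ring
  have eδ2 : δ^(α+1) = N^((-2)*(α+1)) := by
    rw [hδ, ← Real.rpow_mul hN0.le]
  have eN : N^(2*β+2) * N^((-2)*(α+1)) = N^(2*(β-α)) := by
    rw [← Real.rpow_add hN0]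
    congr 1
    ring
  have eP : P * (2^α * δ^(α+1)) = (2^α * K) * (N^(2*(β-α)) * Iβ) := by
    rw [hP, eδ2]
    calc K * N^(2*β+2) * Iβ * (2^α * N^((-2)*(α+1)))
        = (2^α * K) * ((N^(2*β+2) * N^((-2)*(α+1))) * Iβ) := by ring
      _ = (2^α * K) * (N^(2*(β-α)) * Iβ) := by rw [eN]
  have e2a : (2:ℝ)^(α+1) = 2^α * 2 := by
    rw [Real.rpow_add_one (by norm_num : (2:ℝ) ≠ 0) α]
  calc (∫ x in (-1:ℝ)..1, (1-x^2)^α * (q.eval x)^2)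
      ≤ P * (2^α * δ^(α+1)) + δ^(α-β) * Iβ + P * (2^α * δ^(α+1)) := by
        rw [hsplit]
        exact add_le_add (add_le_add hendL hmid) hendR
    _ = δ^(α-β) * Iβ + 2 * (P * (2^α * δ^(α+1))) := by ring
    _ = N^(2*(β-α)) * Iβ + 2 * ((2^α * K) * (N^(2*(β-α)) * Iβ)) := by rw [eδ1, eP]
    _ = (1 + 2^(α+1) * K) * N^(2*(β-α)) * Iβ := by rw [e2a]; ring
end

section
/- For fixed α ≥ 0, the function g(n) = Γ(n+α+1)² / (Γ(n+1) Γ(n+2α+1)) is monotonically increasing in n ∈ ℕ, n ≥ 1, and lim_{n→∞} g(n) = 1. -/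
open Real Filter

private lemma prod_eq_gamma (β : ℝ) (hβ : 0 < β) (n : ℕ) :
    Real.Gamma (β + n + 1) = Real.Gamma β * ∏ j ∈ Finset.range (n + 1), (β + j) := by
  induction n with
  | zero => simp [Real.Gamma_add_one hβ.ne']; ring
  | succ n ih =>
      have h1 : (0:ℝ) < β + n + 1 := by positivity
      rw [Finset.prod_range_succ, ← mul_assoc, ← ih]
      push_cast
      rw [show β + ((n:ℝ)+1) + 1 = (β + (n:ℝ) + 1) + 1 by ring, Real.Gamma_add_one h1.ne']
      ring

private lemma key_limit (β : ℝ) (hβ : 0 < β) :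
    Tendsto (fun n : ℕ => (n:ℝ) ^ β * Real.Gamma ((n:ℝ) + 1) / Real.Gamma ((n:ℝ) + β + 1))
      atTop (nhds 1) := by
  have hΓ : 0 < Real.Gamma β := Real.Gamma_pos_of_pos hβ
  have h := (Real.GammaSeq_tendsto_Gamma β).div_const (Real.Gamma β)
  rw [div_self hΓ.ne'] at h
  refine h.congr (fun n => ?_)
  have hprod : ∏ j ∈ Finset.range (n + 1), (β + j) = Real.Gamma (β + n + 1) / Real.Gamma β := by
    rw [prod_eq_gamma β hβ n]; field_simp
  have hg : (0:ℝ) < Real.Gamma (β + n + 1) := Real.Gamma_pos_of_pos (by positivity)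
  rw [Real.GammaSeq, hprod, show ((n:ℝ) + β + 1) = β + n + 1 by ring,
    ← Real.Gamma_nat_eq_factorial, show ((n:ℝ) + 1) = (n+1 : ℕ) by push_cast; ring]
  field_simp

theorem stmt_3 (α : ℝ) (hα : 0 ≤ α) :
    (∀ n m : ℕ, 1 ≤ n → n ≤ m →
      Real.Gamma ((n : ℝ) + α + 1)^2 / (Real.Gamma ((n : ℝ) + 1) * Real.Gamma ((n : ℝ) + 2*α + 1))
        ≤ Real.Gamma ((m : ℝ) + α + 1)^2 / (Real.Gamma ((m : ℝ) + 1) * Real.Gamma ((m : ℝ) + 2*α + 1)))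
    ∧ Filter.Tendsto
        (fun n : ℕ => Real.Gamma ((n : ℝ) + α + 1)^2
          / (Real.Gamma ((n : ℝ) + 1) * Real.Gamma ((n : ℝ) + 2*α + 1)))
        Filter.atTop (nhds 1) := by
  set g : ℕ → ℝ := fun n => Real.Gamma ((n : ℝ) + α + 1)^2
      / (Real.Gamma ((n : ℝ) + 1) * Real.Gamma ((n : ℝ) + 2*α + 1)) with hg
  have hstep : ∀ n : ℕ, g n ≤ g (n + 1) := by
    intro n
    have hA : (0:ℝ) < Real.Gamma ((n:ℝ) + α + 1) := Real.Gamma_pos_of_pos (by positivity)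
    have hB : (0:ℝ) < Real.Gamma ((n:ℝ) + 1) := Real.Gamma_pos_of_pos (by positivity)
    have hC : (0:ℝ) < Real.Gamma ((n:ℝ) + 2*α + 1) := Real.Gamma_pos_of_pos (by positivity)
    have e1 : Real.Gamma (((n:ℕ)+1 : ℕ) + α + 1) = ((n:ℝ)+α+1) * Real.Gamma ((n:ℝ)+α+1) := by
      push_cast
      rw [show (n:ℝ) + 1 + α + 1 = ((n:ℝ) + α + 1) + 1 by ring,
        Real.Gamma_add_one (by positivity)]
    have e2 : Real.Gamma (((n:ℕ)+1 : ℕ) + 1) = ((n:ℝ)+1) * Real.Gamma ((n:ℝ)+1) := by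
      push_cast
      rw [show (n:ℝ) + 1 + 1 = ((n:ℝ) + 1) + 1 by ring, Real.Gamma_add_one (by positivity)]
    have e3 : Real.Gamma (((n:ℕ)+1 : ℕ) + 2*α + 1) = ((n:ℝ)+2*α+1) * Real.Gamma ((n:ℝ)+2*α+1) := by
      push_cast
      rw [show (n:ℝ) + 1 + 2*α + 1 = ((n:ℝ) + 2*α + 1) + 1 by ring,
        Real.Gamma_add_one (by positivity)]
    simp only [hg, e1, e2, e3]
    rw [div_le_div_iff₀ (by positivity) (by positivity)]
    have key : ((n:ℝ)+1) * ((n:ℝ)+2*α+1) ≤ ((n:ℝ)+α+1)^2 := by nlinarith [sq_nonneg α]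
    nlinarith [mul_pos hB hC, sq_nonneg (Real.Gamma ((n:ℝ)+α+1)),
      mul_nonneg (mul_nonneg (sq_nonneg (Real.Gamma ((n:ℝ)+α+1))) (mul_pos hB hC).le)
        (sub_nonneg.mpr key)]
  have hmono : ∀ n m : ℕ, n ≤ m → g n ≤ g m := by
    intro n m hnm
    induction m, hnm using Nat.le_induction with
    | base => exact le_refl _
    | succ m hm ih => exact ih.trans (hstep m)
  constructor
  · exact fun n m _ hnm => hmono n m hnm
  · rcases eq_or_lt_of_le hα with rfl | hα'
    · have : ∀ n : ℕ, g n = 1 := by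
        intro n
        have hB : (0:ℝ) < Real.Gamma ((n:ℝ) + 1) := Real.Gamma_pos_of_pos (by positivity)
        simp only [hg]
        rw [show (n:ℝ) + 0 + 1 = (n:ℝ) + 1 by ring, show (n:ℝ) + 2*0 + 1 = (n:ℝ) + 1 by ring]
        field_simp
      simpa [funext this] using tendsto_const_nhds
    · have h1 := key_limit α hα'
      have h2 := key_limit (2*α) (by positivity)
      have hdiv := h2.div (h1.mul h1) (by norm_num)
      rw [show (1:ℝ) / (1*1) = 1 by norm_num] at hdiv
      refine hdiv.congr' ?_
      filter_upwards [eventually_gt_atTop 0] with n hn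
      have hnpos : (0:ℝ) < (n:ℝ) := by exact_mod_cast hn
      have hA : (0:ℝ) < Real.Gamma ((n:ℝ) + α + 1) := Real.Gamma_pos_of_pos (by positivity)
      have hB : (0:ℝ) < Real.Gamma ((n:ℝ) + 1) := Real.Gamma_pos_of_pos (by positivity)
      have hC : (0:ℝ) < Real.Gamma ((n:ℝ) + 2*α + 1) := Real.Gamma_pos_of_pos (by positivity)
      have hr : (n:ℝ) ^ (2*α) = (n:ℝ)^α * (n:ℝ)^α := by
        rw [← Real.rpow_add hnpos]; ring_nf
      simp only [hg, Pi.div_apply]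
      rw [hr]
      field_simp
end

section
/- For all integers n ≥ k ≥ 0, ∫_{-1}^{1} (1-x²)^k (L_n^{(k)}(x))² dx = (2/(2n+1)) · (n+k)!/(n-k)!, where L_n^{(k)} denotes the k-th derivative of the n-th Legendre polynomial; the integral vanishes when n < k. -/
open MeasureTheory

open Polynomial intervalIntegral
open scoped ENNReal



lemma poly_ii (p : Polynomial ℝ) (a b : ℝ) :
    IntervalIntegrable (fun x => p.eval x) volume a b :=
  p.continuous.intervalIntegrable a b

lemma eq_zero_of_integral_sq (p : Polynomial ℝ)
    (h : (∫ x in (-1:ℝ)..1, (p.eval x)^2) = 0) : p = 0 := by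
  by_contra hp
  have h1 : (∫ x in (-1:ℝ)..1, (p.eval x)^2) = ∫ x in Set.Ioc (-1:ℝ) 1, (p.eval x)^2 :=
    integral_of_le (by norm_num)
  have hnull : volume {x : ℝ | p.IsRoot x} = 0 :=
    Set.Finite.measure_zero (Polynomial.finite_setOf_isRoot hp) _
  have hsupp : Set.Ioc (-1:ℝ) 1 \ {x : ℝ | p.IsRoot x}
      ⊆ (Function.support fun x => (p.eval x)^2) ∩ Set.Ioc (-1:ℝ) 1 := by
    intro x hx
    refine ⟨?_, hx.1⟩
    simp only [Function.mem_support]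
    have : p.eval x ≠ 0 := hx.2
    positivity
  have hpos : 0 < ∫ x in Set.Ioc (-1:ℝ) 1, (p.eval x)^2 := by
    rw [setIntegral_pos_iff_support_of_nonneg_ae]
    · calc (0:ℝ≥0∞) < volume (Set.Ioc (-1:ℝ) 1) := by simp
        _ = volume (Set.Ioc (-1:ℝ) 1 \ {x : ℝ | p.IsRoot x}) := (measure_diff_null hnull).symm
        _ ≤ _ := measure_mono hsupp
    · filter_upwards with x using by positivity
    · exact ((p.continuous.pow 2).integrableOn_Ioc)
  rw [← h1, h] at hpos
  exact lt_irrefl _ hpos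

noncomputable def Dop (p : Polynomial ℝ) : Polynomial ℝ :=
  Polynomial.derivative ((1 - Polynomial.X^2) * Polynomial.derivative p)

lemma natDegree_Dop_le (p : Polynomial ℝ) : (Dop p).natDegree ≤ p.natDegree := by
  by_cases hp : p.natDegree = 0
  · obtain ⟨a, rfl⟩ := Polynomial.natDegree_eq_zero.mp hp
    simp [Dop]
  · have h1 : ((1 - Polynomial.X^2 : Polynomial ℝ)).natDegree ≤ 2 := by compute_degree
    have h2 : (Polynomial.derivative p).natDegree ≤ p.natDegree - 1 :=
      Polynomial.natDegree_derivative_le p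
    have h3 : ((1 - Polynomial.X^2) * Polynomial.derivative p).natDegree ≤ p.natDegree + 1 := by
      refine le_trans (Polynomial.natDegree_mul_le) ?_
      omega
    have h4 := Polynomial.natDegree_derivative_le
      ((1 - Polynomial.X^2) * Polynomial.derivative p)
    unfold Dop
    omega

lemma ibp1 (p q : Polynomial ℝ) :
    (∫ x in (-1:ℝ)..1, q.eval x * (Dop p).eval x)
      = -∫ x in (-1:ℝ)..1, (Polynomial.derivative q).eval x
          * ((1 - Polynomial.X^2) * Polynomial.derivative p).eval x := by
  have hA : ∀ x ∈ Set.uIcc (-1:ℝ) 1, HasDerivAt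
      (fun y => ((1 - Polynomial.X^2) * Polynomial.derivative p).eval y) ((Dop p).eval x) x :=
    fun x _ => Polynomial.hasDerivAt _ x
  have hB : ∀ x ∈ Set.uIcc (-1:ℝ) 1, HasDerivAt
      (fun y => q.eval y) ((Polynomial.derivative q).eval x) x :=
    fun x _ => Polynomial.hasDerivAt _ x
  rw [intervalIntegral.integral_mul_deriv_eq_deriv_mul hB hA (poly_ii _ _ _) (poly_ii _ _ _)]
  simp

lemma Dop_symm (p q : Polynomial ℝ) :
    (∫ x in (-1:ℝ)..1, (Dop p).eval x * q.eval x)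
      = ∫ x in (-1:ℝ)..1, p.eval x * (Dop q).eval x := by
  have h1 := ibp1 p q
  have h2 := ibp1 q p
  have e1 : (∫ x in (-1:ℝ)..1, (Dop p).eval x * q.eval x)
      = ∫ x in (-1:ℝ)..1, q.eval x * (Dop p).eval x := by
    apply intervalIntegral.integral_congr; intro x _; ring
  have e2 : (∫ x in (-1:ℝ)..1, (Polynomial.derivative q).eval x
        * ((1 - Polynomial.X^2) * Polynomial.derivative p).eval x)
      = ∫ x in (-1:ℝ)..1, (Polynomial.derivative p).eval x
        * ((1 - Polynomial.X^2) * Polynomial.derivative q).eval x := by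
    apply intervalIntegral.integral_congr; intro x _; simp; ring
  rw [e1, h1, e2, ← h2]

section
variable (L : ℕ → Polynomial ℝ) (hdeg : ∀ k, (L k).natDegree = k)
  (horth : ∀ k l, k ≠ l → ∫ x in (-1:ℝ)..1, (L k).eval x * (L l).eval x = 0)
  (hnorm1 : ∀ k, (L k).eval 1 = 1)

include hnorm1 in
lemma L_ne_zero (k : ℕ) : L k ≠ 0 := by
  intro h
  have := hnorm1 k
  rw [h] at this
  simp at this

include hdeg hnorm1 in
lemma L_coeff_ne (k : ℕ) : (L k).coeff k ≠ 0 := by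
  have : (L k).coeff k = (L k).leadingCoeff := by rw [Polynomial.leadingCoeff, hdeg]
  rw [this, Polynomial.leadingCoeff_ne_zero]
  exact L_ne_zero L hnorm1 k

include hdeg hnorm1 in
lemma span_orth (f : Polynomial ℝ) (n : ℕ)
    (hf : ∀ m, m < n → ∫ x in (-1:ℝ)..1, f.eval x * (L m).eval x = 0) :
    ∀ q : Polynomial ℝ, q.natDegree < n → ∫ x in (-1:ℝ)..1, f.eval x * q.eval x = 0 := by
  suffices H : ∀ d, ∀ q : Polynomial ℝ, q.natDegree = d → d < n →
      ∫ x in (-1:ℝ)..1, f.eval x * q.eval x = 0 by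
    intro q hq; exact H q.natDegree q rfl hq
  intro d
  induction d using Nat.strong_induction_on with
  | _ d ih =>
    intro q hqd hdn
    by_cases hq0 : q = 0
    · simp [hq0]
    · set c := q.coeff d / (L d).coeff d with hc
      set r := q - Polynomial.C c * L d with hr
      have hcoeffr : r.coeff d = 0 := by
        rw [hr]
        have hLc := L_coeff_ne L hdeg hnorm1 d
        simp only [Polynomial.coeff_sub, Polynomial.coeff_C_mul, hc]
        field_simp
        ring
      have hrdeg : r.natDegree ≤ d := by
        refine le_trans (Polynomial.natDegree_sub_le _ _) ?_
        simp only [max_le_iff]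
        refine ⟨le_of_eq hqd, le_trans (Polynomial.natDegree_C_mul_le _ _) (le_of_eq (hdeg d))⟩
      have hsplit : q = Polynomial.C c * L d + r := by rw [hr]; ring
      have hint : ∫ x in (-1:ℝ)..1, f.eval x * q.eval x
          = c * (∫ x in (-1:ℝ)..1, f.eval x * (L d).eval x)
            + ∫ x in (-1:ℝ)..1, f.eval x * r.eval x := by
        rw [← intervalIntegral.integral_const_mul, ← intervalIntegral.integral_add
          (f := fun x => c * (f.eval x * (L d).eval x)) (g := fun x => f.eval x * r.eval x)
          (((continuous_const.mul (f.continuous.mul (L d).continuous)).intervalIntegrable _ _))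
          ((f.continuous.mul r.continuous).intervalIntegrable _ _)]
        congr 1
        ext x
        rw [hsplit]
        simp
        ring
      rw [hint, hf d hdn, mul_zero, zero_add]
      by_cases hr0 : r = 0
      · simp [hr0]
      · have hrd : r.natDegree < d := by
          rcases lt_or_eq_of_le hrdeg with h | h
          · exact h
          · exfalso
            have : r.coeff d = r.leadingCoeff := by rw [Polynomial.leadingCoeff, h]
            rw [this] at hcoeffr
            exact hr0 (Polynomial.leadingCoeff_eq_zero.mp hcoeffr)
        exact ih r.natDegree hrd r rfl (lt_trans hrd hdn)


include hdeg horth hnorm1 in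
lemma ode (n : ℕ) : Dop (L n) = Polynomial.C (-(n:ℝ)*((n:ℝ)+1)) * L n := by
  rcases Nat.eq_zero_or_pos n with hn0 | hn
  · subst hn0
    obtain ⟨a, ha⟩ := Polynomial.natDegree_eq_zero.mp (hdeg 0)
    rw [← ha]
    simp [Dop, ← ha]
  · obtain ⟨m, rfl⟩ : ∃ m, n = m + 1 := ⟨n - 1, by omega⟩
    set nn := m + 1 with hnn
    set E := Dop (L nn) - Polynomial.C (-(nn:ℝ)*((nn:ℝ)+1)) * L nn with hE
    have hdegE : E.natDegree ≤ nn := by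
      refine le_trans (Polynomial.natDegree_sub_le _ _) ?_
      simp only [max_le_iff]
      exact ⟨le_trans (natDegree_Dop_le _) (le_of_eq (hdeg nn)),
        le_trans (Polynomial.natDegree_C_mul_le _ _) (le_of_eq (hdeg nn))⟩
    have hcoeffE : E.coeff nn = 0 := by
      have hd1 : (Dop (L nn)).coeff nn
          = ((1 - Polynomial.X^2) * Polynomial.derivative (L nn)).coeff (nn+1) * ((nn:ℝ)+1) := by
        rw [Dop, Polynomial.coeff_derivative]
      have hd2 : ((1 - Polynomial.X^2) * Polynomial.derivative (L nn)).coeff (nn+1)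
          = (Polynomial.derivative (L nn)).coeff (nn+1)
            - (Polynomial.derivative (L nn)).coeff (m) := by
        rw [sub_mul, one_mul, Polynomial.coeff_sub]
        congr 1
        have : nn + 1 = m + 2 := by omega
        rw [this, Polynomial.coeff_X_pow_mul]
      have hd3 : (Polynomial.derivative (L nn)).coeff (nn+1) = 0 := by
        rw [Polynomial.coeff_derivative]
        rw [Polynomial.coeff_eq_zero_of_natDegree_lt (by rw [hdeg]; omega)]
        ring
      have hd4 : (Polynomial.derivative (L nn)).coeff m
          = (L nn).coeff nn * ((m:ℝ)+1) := by
        rw [Polynomial.coeff_derivative]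
      rw [hE, Polynomial.coeff_sub, Polynomial.coeff_C_mul, hd1, hd2, hd3, hd4, hnn]
      push_cast
      ring
    have horthE : ∀ j, j < nn → ∫ x in (-1:ℝ)..1, E.eval x * (L j).eval x = 0 := by
      intro j hj
      have hsplit : ∀ x : ℝ, E.eval x * (L j).eval x
          = (Dop (L nn)).eval x * (L j).eval x
            + (-((-(nn:ℝ)*((nn:ℝ)+1)))) * ((L nn).eval x * (L j).eval x) := by
        intro x; rw [hE]; simp; ring
      rw [intervalIntegral.integral_congr (fun x _ => hsplit x)]
      rw [intervalIntegral.integral_add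
        (f := fun x => (Dop (L nn)).eval x * (L j).eval x)
        (g := fun x => (-((-(nn:ℝ)*((nn:ℝ)+1)))) * ((L nn).eval x * (L j).eval x))
        (((Dop (L nn)).continuous.mul (L j).continuous).intervalIntegrable _ _)
        ((continuous_const.mul ((L nn).continuous.mul (L j).continuous)).intervalIntegrable _ _)]
      rw [intervalIntegral.integral_const_mul, horth nn j (by omega), mul_zero, add_zero]
      rw [Dop_symm]
      exact span_orth L hdeg hnorm1 (L nn) nn
        (fun i hi => horth nn i (by omega)) (Dop (L j))
        (lt_of_le_of_lt (le_trans (natDegree_Dop_le _) (le_of_eq (hdeg j))) hj)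
    have hEzero : E = 0 := by
      by_cases hE0 : E = 0
      · exact hE0
      · have hdegE' : E.natDegree < nn := by
          rcases lt_or_eq_of_le hdegE with h | h
          · exact h
          · exfalso
            have : E.coeff nn = E.leadingCoeff := by rw [Polynomial.leadingCoeff, h]
            rw [this] at hcoeffE
            exact hE0 (Polynomial.leadingCoeff_eq_zero.mp hcoeffE)
        have := span_orth L hdeg hnorm1 E nn horthE E hdegE'
        have hsq : (∫ x in (-1:ℝ)..1, (E.eval x)^2) = 0 := by
          rw [← this]
          apply intervalIntegral.integral_congr; intro x _; ring
        exact eq_zero_of_integral_sq E hsq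
    have := sub_eq_zero.mp hEzero
    exact this


include hdeg horth hnorm1 in
lemma ode_iter (n : ℕ) : ∀ k : ℕ,
    (1 - Polynomial.X^2) * Polynomial.derivative^[k+2] (L n)
      - Polynomial.C (2*((k:ℝ)+1)) * Polynomial.X * Polynomial.derivative^[k+1] (L n)
      + Polynomial.C (((n:ℝ)-(k:ℝ))*((n:ℝ)+(k:ℝ)+1)) * Polynomial.derivative^[k] (L n) = 0 := by
  intro k
  induction k with
  | zero =>
    have h := ode L hdeg horth hnorm1 n
    rw [Dop] at h
    have hexp : Polynomial.derivative ((1 - Polynomial.X^2) * Polynomial.derivative (L n))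
        = (1 - Polynomial.X^2) * Polynomial.derivative (Polynomial.derivative (L n))
          - Polynomial.C 2 * Polynomial.X * Polynomial.derivative (L n) := by
      rw [Polynomial.derivative_mul]
      simp
      simp only [map_ofNat]
      ring
    rw [hexp] at h
    simp only [Function.iterate_succ_apply', Function.iterate_zero_apply, Function.iterate_one,
      Nat.cast_zero]
    simp only [map_mul, map_add, map_sub, map_one, map_neg, map_zero, map_ofNat] at h ⊢
    linear_combination h
  | succ k ih =>
    have hd := congrArg Polynomial.derivative ih
    simp only [Polynomial.derivative_add, Polynomial.derivative_sub, Polynomial.derivative_mul,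
      Polynomial.derivative_C, Polynomial.derivative_one, Polynomial.derivative_X,
      Polynomial.derivative_X_pow, map_zero, zero_mul, zero_add, one_mul, mul_one] at hd
    have hit : ∀ j : ℕ, Polynomial.derivative (Polynomial.derivative^[j] (L n))
        = Polynomial.derivative^[j+1] (L n) := by
      intro j; exact (Function.iterate_succ_apply' _ _ _).symm
    rw [hit, hit, hit] at hd
    push_cast
    push_cast at hd
    simp only [map_mul, map_add, map_sub, map_one, map_neg, map_zero, map_ofNat] at hd ⊢
    linear_combination hd


include hdeg horth hnorm1 in
lemma bdry (n k : ℕ) :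
    Polynomial.derivative ((1 - Polynomial.X^2)^(k+1) * Polynomial.derivative^[k+1] (L n))
      = - Polynomial.C (((n:ℝ)-(k:ℝ))*((n:ℝ)+(k:ℝ)+1))
          * ((1 - Polynomial.X^2)^k * Polynomial.derivative^[k] (L n)) := by
  have h := ode_iter L hdeg horth hnorm1 n k
  rw [Polynomial.derivative_mul, Polynomial.derivative_pow]
  have hit : Polynomial.derivative (Polynomial.derivative^[k+1] (L n))
      = Polynomial.derivative^[k+2] (L n) := (Function.iterate_succ_apply' _ _ _).symm
  rw [hit]
  simp only [Polynomial.derivative_sub, Polynomial.derivative_one, Polynomial.derivative_X_pow,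
    Nat.add_sub_cancel, zero_sub, Nat.cast_ofNat, pow_one]
  simp only [map_mul, map_add, map_sub, map_one, map_neg, map_zero, map_ofNat,
    Polynomial.C_eq_natCast] at h ⊢
  push_cast at h ⊢
  linear_combination ((1:Polynomial ℝ) - Polynomial.X^2)^k * h

include hdeg horth hnorm1 in
lemma Jrec (n k : ℕ) :
    (∫ x in (-1:ℝ)..1, (1 - x^2)^(k+1) * ((Polynomial.derivative^[k+1] (L n)).eval x)^2)
      = ((n:ℝ)-(k:ℝ))*((n:ℝ)+(k:ℝ)+1)
        * ∫ x in (-1:ℝ)..1, (1 - x^2)^k * ((Polynomial.derivative^[k] (L n)).eval x)^2 := by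
  set A := (1 - Polynomial.X^2)^(k+1) * Polynomial.derivative^[k+1] (L n) with hA
  have hu : ∀ x ∈ Set.uIcc (-1:ℝ) 1, HasDerivAt (fun y => A.eval y)
      ((Polynomial.derivative A).eval x) x := fun x _ => Polynomial.hasDerivAt _ x
  have hv : ∀ x ∈ Set.uIcc (-1:ℝ) 1, HasDerivAt (fun y => (Polynomial.derivative^[k] (L n)).eval y)
      ((Polynomial.derivative^[k+1] (L n)).eval x) x := by
    intro x _
    have h0 := Polynomial.hasDerivAt (Polynomial.derivative^[k] (L n)) x
    have h1 : Polynomial.derivative (Polynomial.derivative^[k] (L n))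
        = Polynomial.derivative^[k+1] (L n) := (Function.iterate_succ_apply' _ _ _).symm
    rwa [h1] at h0
  have hibp := intervalIntegral.integral_mul_deriv_eq_deriv_mul hu hv
    (poly_ii _ _ _) (poly_ii _ _ _)
  have hA1 : A.eval 1 = 0 := by rw [hA]; simp
  have hA2 : A.eval (-1) = 0 := by rw [hA]; simp
  rw [hA1, hA2] at hibp
  have hlhs : (∫ x in (-1:ℝ)..1, A.eval x * (Polynomial.derivative^[k+1] (L n)).eval x)
      = ∫ x in (-1:ℝ)..1, (1 - x^2)^(k+1) * ((Polynomial.derivative^[k+1] (L n)).eval x)^2 := by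
    apply intervalIntegral.integral_congr; intro x _
    rw [hA]; simp; ring
  have hrhs : (∫ x in (-1:ℝ)..1, (Polynomial.derivative A).eval x
        * (Polynomial.derivative^[k] (L n)).eval x)
      = -(((n:ℝ)-(k:ℝ))*((n:ℝ)+(k:ℝ)+1))
        * ∫ x in (-1:ℝ)..1, (1 - x^2)^k * ((Polynomial.derivative^[k] (L n)).eval x)^2 := by
    rw [← intervalIntegral.integral_const_mul]
    apply intervalIntegral.integral_congr; intro x _
    rw [bdry L hdeg horth hnorm1 n k]
    simp
    ring
  rw [hlhs, hrhs] at hibp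
  rw [hibp]
  ring


include hdeg horth hnorm1 in
lemma val_rec (n k : ℕ) :
    2*((k:ℝ)+1) * (Polynomial.derivative^[k+1] (L n)).eval 1
      = ((n:ℝ)-(k:ℝ))*((n:ℝ)+(k:ℝ)+1) * (Polynomial.derivative^[k] (L n)).eval 1 := by
  have h := congrArg (Polynomial.eval (1:ℝ)) (ode_iter L hdeg horth hnorm1 n k)
  simp only [Polynomial.eval_add, Polynomial.eval_sub, Polynomial.eval_mul, Polynomial.eval_pow,
    Polynomial.eval_one, Polynomial.eval_X, Polynomial.eval_C, Polynomial.eval_zero] at h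
  norm_num at h
  have hiter : Polynomial.derivative^[k] (Polynomial.derivative (L n))
      = Polynomial.derivative^[k+1] (L n) := (Function.iterate_succ_apply _ _ _).symm
  rw [hiter] at h
  linear_combination -h

include hdeg horth hnorm1 in
lemma val_formula (n : ℕ) : ∀ k, k ≤ n →
    (Polynomial.derivative^[k] (L n)).eval 1
      = (Nat.factorial (n+k) : ℝ)
        / ((Nat.factorial (n-k) : ℝ) * 2^k * (Nat.factorial k : ℝ)) := by
  intro k
  induction k with
  | zero =>
    intro _
    simp only [Function.iterate_zero_apply, Nat.add_zero, Nat.sub_zero, pow_zero,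
      Nat.factorial_zero, Nat.cast_one, mul_one, hnorm1 n]
    rw [div_self]
    exact Nat.cast_ne_zero.mpr (Nat.factorial_ne_zero n)
  | succ k ih =>
    intro hk
    have hk' : k ≤ n := by omega
    have hrec := val_rec L hdeg horth hnorm1 n k
    rw [ih hk'] at hrec
    have hnz1 : ((Nat.factorial (n-k)) : ℝ) ≠ 0 := Nat.cast_ne_zero.mpr (Nat.factorial_ne_zero _)
    have hnz2 : ((Nat.factorial k) : ℝ) ≠ 0 := Nat.cast_ne_zero.mpr (Nat.factorial_ne_zero _)
    have hnz3 : ((Nat.factorial (n-(k+1))) : ℝ) ≠ 0 := Nat.cast_ne_zero.mpr (Nat.factorial_ne_zero _)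
    have hnz4 : ((Nat.factorial (k+1)) : ℝ) ≠ 0 := Nat.cast_ne_zero.mpr (Nat.factorial_ne_zero _)
    have hnz5 : (2:ℝ)^k ≠ 0 := pow_ne_zero _ (by norm_num)
    have e1 : ((n:ℝ)-(k:ℝ)) = ((n-k : ℕ) : ℝ) := by
      rw [Nat.cast_sub hk']
    have e2 : (Nat.factorial (n+(k+1)) : ℝ) = ((n:ℝ)+(k:ℝ)+1) * (Nat.factorial (n+k) : ℝ) := by
      have : n + (k+1) = (n+k) + 1 := by omega
      rw [this, Nat.factorial_succ]
      push_cast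
      ring
    have e3 : (Nat.factorial (n-k) : ℝ) = ((n-k:ℕ):ℝ) * (Nat.factorial (n-(k+1)) : ℝ) := by
      have h4 : n - k = (n - (k+1)) + 1 := by omega
      rw [h4, Nat.factorial_succ]
      push_cast
      try ring
    have e4 : (Nat.factorial (k+1) : ℝ) = ((k:ℝ)+1) * (Nat.factorial k : ℝ) := by
      rw [Nat.factorial_succ]; push_cast; ring
    have hD' : ((Nat.factorial (n-(k+1)) : ℝ) * 2^(k+1) * (Nat.factorial (k+1) : ℝ)) ≠ 0 := by
      positivity
    field_simp at hrec
    have hiter : Polynomial.derivative^[k] (Polynomial.derivative (L n))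
        = Polynomial.derivative^[k+1] (L n) := (Function.iterate_succ_apply _ _ _).symm
    have hnk : ((n:ℝ)-(k:ℝ)) ≠ 0 := by
      rw [e1]; exact Nat.cast_ne_zero.mpr (by omega)
    rw [eq_div_iff hD']
    refine mul_left_cancel₀ hnk ?_
    rw [e2, e4]
    rw [e3, ← e1] at hrec
    linear_combination hrec

lemma deriv_poly_I (n : ℕ) :
    Polynomial.derivative (Polynomial.X * (1 - Polynomial.X^2)^(n+1) : Polynomial ℝ)
      = Polynomial.C (2*(n:ℝ)+3) * (1 - Polynomial.X^2)^(n+1)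
        - Polynomial.C (2*(n:ℝ)+2) * (1 - Polynomial.X^2)^n := by
  rw [Polynomial.derivative_mul, Polynomial.derivative_pow, Polynomial.derivative_X]
  simp only [Polynomial.derivative_sub, Polynomial.derivative_one, Polynomial.derivative_X_pow,
    Nat.add_sub_cancel, zero_sub, Nat.cast_ofNat, pow_one, one_mul]
  simp only [map_mul, map_add, map_ofNat, Polynomial.C_eq_natCast]
  push_cast
  ring

lemma I_val : ∀ n : ℕ, (∫ x in (-1:ℝ)..1, (1 - x^2)^n)
    = 2^(2*n+1) * ((Nat.factorial n : ℝ))^2 / ((Nat.factorial (2*n+1) : ℝ)) := by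
  intro n
  induction n with
  | zero => norm_num
  | succ n ih =>
    have hcont : ∀ m : ℕ, Continuous (fun x : ℝ => (1 - x^2)^m) := by
      intro m
      exact (continuous_const.sub ((continuous_id.pow 2))).pow m
    have hftc : (∫ x in (-1:ℝ)..1,
          (Polynomial.derivative (Polynomial.X * (1 - Polynomial.X^2)^(n+1) : Polynomial ℝ)).eval x)
        = 0 := by
      rw [intervalIntegral.integral_eq_sub_of_hasDerivAt
        (fun x _ => Polynomial.hasDerivAt _ x) (poly_ii _ _ _)]
      simp
    have hsplit : (∫ x in (-1:ℝ)..1,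
          (Polynomial.derivative (Polynomial.X * (1 - Polynomial.X^2)^(n+1) : Polynomial ℝ)).eval x)
        = (2*(n:ℝ)+3) * (∫ x in (-1:ℝ)..1, (1 - x^2)^(n+1))
          - (2*(n:ℝ)+2) * (∫ x in (-1:ℝ)..1, (1 - x^2)^n) := by
      rw [← intervalIntegral.integral_const_mul, ← intervalIntegral.integral_const_mul,
        ← intervalIntegral.integral_sub
          (f := fun x => (2*(n:ℝ)+3) * (1 - x^2)^(n+1)) (g := fun x => (2*(n:ℝ)+2) * (1 - x^2)^n)
          ((continuous_const.mul (hcont (n+1))).intervalIntegrable _ _)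
          ((continuous_const.mul (hcont n)).intervalIntegrable _ _)]
      apply intervalIntegral.integral_congr; intro x _
      rw [deriv_poly_I]
      simp
    rw [hftc] at hsplit
    have h3 : (2*(n:ℝ)+3) ≠ 0 := by positivity
    have hIn1 : (∫ x in (-1:ℝ)..1, (1 - x^2)^(n+1))
        = (2*(n:ℝ)+2) / (2*(n:ℝ)+3) * (∫ x in (-1:ℝ)..1, (1 - x^2)^n) := by
      field_simp
      linarith [hsplit]
    rw [hIn1, ih]
    have e1 : Nat.factorial (2*(n+1)+1) = (2*n+3) * ((2*n+2) * Nat.factorial (2*n+1)) := by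
      have h4 : 2*(n+1)+1 = (2*n+1) + 1 + 1 := by omega
      rw [h4, Nat.factorial_succ, Nat.factorial_succ]
      try ring_nf
      try omega
    have e2 : Nat.factorial (n+1) = (n+1) * Nat.factorial n := Nat.factorial_succ n
    rw [e1, e2]
    have hnz1 : ((Nat.factorial (2*n+1)) : ℝ) ≠ 0 := Nat.cast_ne_zero.mpr (Nat.factorial_ne_zero _)
    push_cast
    have h5 : (2*(n:ℝ)+2) ≠ 0 := by positivity
    field_simp
    ring

end


theorem stmt_6 (L : ℕ → Polynomial ℝ)
    (hdeg : ∀ k, (L k).natDegree = k)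
    (horth : ∀ k l, k ≠ l → ∫ x in (-1:ℝ)..1, (L k).eval x * (L l).eval x = 0)
    (hnorm1 : ∀ k, (L k).eval 1 = 1) :
    ∀ n k : ℕ,
      (k ≤ n →
        ∫ x in (-1:ℝ)..1, (1 - x^2)^k * ((Polynomial.derivative^[k] (L n)).eval x)^2
          = (2 / (2*(n : ℝ) + 1)) * ((Nat.factorial (n + k) : ℝ) / (Nat.factorial (n - k) : ℝ)))
      ∧ (n < k →
        ∫ x in (-1:ℝ)..1, (1 - x^2)^k * ((Polynomial.derivative^[k] (L n)).eval x)^2 = 0) := by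
  intro n k
  constructor
  · intro hkn
    set JJ : ℕ → ℝ := fun j =>
      ∫ x in (-1:ℝ)..1, (1 - x^2)^j * ((Polynomial.derivative^[j] (L n)).eval x)^2 with hJJ
    show JJ k = _
    have key : ∀ j, j ≤ n → JJ j
        = JJ 0 * ((Nat.factorial (n+j) : ℝ) / (Nat.factorial (n-j) : ℝ)) := by
      intro j
      induction j with
      | zero =>
        intro _
        rw [Nat.add_zero, Nat.sub_zero, div_self (Nat.cast_ne_zero.mpr (Nat.factorial_ne_zero n)),
          mul_one]
      | succ j ih =>
        intro hj
        have hj' : j ≤ n := by omega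
        have hrec : JJ (j+1) = ((n:ℝ)-(j:ℝ))*((n:ℝ)+(j:ℝ)+1) * JJ j :=
          Jrec L hdeg horth hnorm1 n j
        rw [hrec, ih hj']
        have e1 : ((n:ℝ)-(j:ℝ)) = ((n-j : ℕ) : ℝ) := by rw [Nat.cast_sub hj']
        have e2 : (Nat.factorial (n+(j+1)) : ℝ) = ((n:ℝ)+(j:ℝ)+1) * (Nat.factorial (n+j) : ℝ) := by
          have h4 : n + (j+1) = (n+j) + 1 := by omega
          rw [h4, Nat.factorial_succ]
          push_cast
          ring
        have e3 : (Nat.factorial (n-j) : ℝ) = ((n-j:ℕ):ℝ) * (Nat.factorial (n-(j+1)) : ℝ) := by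
          have h4 : n - j = (n - (j+1)) + 1 := by omega
          rw [h4, Nat.factorial_succ]
          push_cast
          try ring
        have hnz3 : ((Nat.factorial (n-(j+1))) : ℝ) ≠ 0 :=
          Nat.cast_ne_zero.mpr (Nat.factorial_ne_zero _)
        have hnzk : ((n-j:ℕ):ℝ) ≠ 0 := Nat.cast_ne_zero.mpr (by omega)
        rw [e2, e3, e1]
        have hg : ∃ c : ℝ, ((n-j:ℕ):ℝ) = c := ⟨_, rfl⟩
        obtain ⟨c, hc⟩ := hg
        rw [hc] at hnzk ⊢
        field_simp
    -- the constant value of the n-th derivative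
    set vn : ℝ := (Polynomial.derivative^[n] (L n)).eval 1 with hvn
    have hconst : ∀ x : ℝ, (Polynomial.derivative^[n] (L n)).eval x = vn := by
      have hd0 : (Polynomial.derivative^[n] (L n)).natDegree = 0 := by
        have := Polynomial.natDegree_iterate_derivative (L n) n
        rw [hdeg] at this
        omega
      obtain ⟨a, ha⟩ := Polynomial.natDegree_eq_zero.mp hd0
      intro x
      rw [← ha, hvn, ← ha]
      simp
    have hvnval : vn = (Nat.factorial (n+n) : ℝ) / ((2:ℝ)^n * (Nat.factorial n : ℝ)) := by
      rw [hvn, val_formula L hdeg horth hnorm1 n n le_rfl]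
      rw [Nat.sub_self]
      norm_num
    have hJn : JJ n = vn^2 * (2^(2*n+1) * ((Nat.factorial n : ℝ))^2
        / ((Nat.factorial (2*n+1) : ℝ))) := by
      rw [← I_val n, hJJ]
      rw [← intervalIntegral.integral_const_mul]
      apply intervalIntegral.integral_congr; intro x _
      dsimp only
      rw [hconst x]
      ring
    have hJnkey := key n le_rfl
    rw [Nat.sub_self] at hJnkey
    have hfac0 : (Nat.factorial 0 : ℝ) = 1 := by norm_num
    rw [hfac0, div_one] at hJnkey
    have h2n : n + n = 2*n := by omega
    rw [h2n] at hJnkey hvnval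
    have hJ0 : JJ 0 = 2 / (2*(n:ℝ)+1) := by
      have hfnz : ((Nat.factorial (2*n)) : ℝ) ≠ 0 := Nat.cast_ne_zero.mpr (Nat.factorial_ne_zero _)
      have hfnz2 : ((Nat.factorial n) : ℝ) ≠ 0 := Nat.cast_ne_zero.mpr (Nat.factorial_ne_zero _)
      have hfs : (Nat.factorial (2*n+1) : ℝ) = (2*(n:ℝ)+1) * (Nat.factorial (2*n) : ℝ) := by
        rw [Nat.factorial_succ]
        push_cast
        ring
      have h2n1 : (2*(n:ℝ)+1) ≠ 0 := by positivity
      have := hJnkey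
      rw [hJn, hvnval, hfs] at this
      have h2p : (2:ℝ)^n ≠ 0 := by positivity
      field_simp at this
      have hB : ((Nat.factorial (2*n) : ℝ) * ((2^n * (Nat.factorial n : ℝ))^2
          * ((2*(n:ℝ)+1) * (Nat.factorial (2*n) : ℝ)))) ≠ 0 := by
        refine mul_ne_zero hfnz (mul_ne_zero (pow_ne_zero _ (mul_ne_zero h2p hfnz2))
          (mul_ne_zero h2n1 hfnz))
      have hJ0' : JJ 0 = ((Nat.factorial (2*n) : ℝ)^2 * (2^(2*n+1) * (Nat.factorial n : ℝ)^2))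
          / ((Nat.factorial (2*n) : ℝ) * ((2^n * (Nat.factorial n : ℝ))^2
            * ((2*(n:ℝ)+1) * (Nat.factorial (2*n) : ℝ)))) := by
        rw [eq_div_iff hB]
        linear_combination -((Nat.factorial (2*n) : ℝ)^2 * (Nat.factorial n : ℝ)^2) * this
      rw [hJ0', div_eq_div_iff hB (by positivity)]
      ring
    rw [key k hkn, hJ0]
  · intro hnk
    have h0 : Polynomial.derivative^[k] (L n) = 0 :=
      Polynomial.iterate_derivative_eq_zero (by rw [hdeg]; omega)
    rw [h0]
    simp
end

section
/- There exists a constant c > 0 independent of p such that for every polynomial q of degree at most p on [-1,1], ‖(1-x²) q'(x)‖_{L²(-1,1)} ≤ c (p+1) ‖(1-x²)^{1/2} q(x)‖_{L²(-1,1)}. -/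
open MeasureTheory Polynomial

noncomputable def w : Polynomial ℝ := 1 - Polynomial.X^2
noncomputable def J (f : Polynomial ℝ) : ℝ := ∫ x in (-1:ℝ)..1, f.eval x

lemma contInt (f : Polynomial ℝ) : IntervalIntegrable (fun x => f.eval x) volume (-1) 1 :=
  f.continuous.intervalIntegrable _ _

lemma J_add (f g : Polynomial ℝ) : J (f + g) = J f + J g := by
  simp only [J, eval_add]
  exact intervalIntegral.integral_add (contInt f) (contInt g)

lemma J_Cmul (a : ℝ) (f : Polynomial ℝ) : J (C a * f) = a * J f := by
  simp only [J, eval_mul, eval_C]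
  exact intervalIntegral.integral_const_mul a _

lemma J_deriv (f : Polynomial ℝ) : J (derivative f) = f.eval 1 - f.eval (-1) := by
  apply intervalIntegral.integral_eq_sub_of_hasDerivAt (fun x _ => f.hasDerivAt x) (contInt _)

-- Leibniz for X * g
lemma leib1 (g : Polynomial ℝ) (k : ℕ) :
    derivative^[k+1] (X * g) = X * derivative^[k+1] g + C ((k:ℝ)+1) * derivative^[k] g := by
  induction k with
  | zero => simp [derivative_mul]; ring
  | succ k ih =>
    rw [Function.iterate_succ_apply' derivative (k+1), ih]
    rw [Function.iterate_succ_apply' derivative (k+1)]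
    simp only [derivative_add, derivative_mul, derivative_X, derivative_C, derivative_zero, derivative_natCast, derivative_ofNat,
      derivative_one, map_add, map_mul, map_one, map_ofNat, map_natCast]
    rw [Function.iterate_succ_apply' derivative k]
    push_cast
    ring

-- Leibniz for (X^2-1) * g
lemma leib2 (g : Polynomial ℝ) (k : ℕ) :
    derivative^[k+2] ((X^2 - 1) * g) =
      (X^2 - 1) * derivative^[k+2] g + C (2*((k:ℝ)+2)) * (X * derivative^[k+1] g)
        + C (((k:ℝ)+2)*((k:ℝ)+1)) * derivative^[k] g := by
  induction k with
  | zero =>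
    simp only [Function.iterate_succ_apply', Function.iterate_zero_apply]
    simp only [derivative_mul, derivative_add, derivative_sub, derivative_one, derivative_X,
      derivative_pow, derivative_X_pow, derivative_C, derivative_zero, derivative_natCast, derivative_ofNat,
      map_add, map_mul, map_one, map_ofNat, map_natCast]
    push_cast
    ring
  | succ k ih =>
    rw [Function.iterate_succ_apply' derivative (k+2), ih]
    rw [Function.iterate_succ_apply' derivative (k+2)]
    simp only [derivative_add, derivative_mul, derivative_X, derivative_C, derivative_sub,
      derivative_one, derivative_pow, derivative_X_pow, derivative_zero, derivative_natCast, derivative_ofNat,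
      map_add, map_mul, map_one, map_ofNat, map_natCast]
    rw [Function.iterate_succ_apply' derivative (k+1), Function.iterate_succ_apply' derivative k]
    push_cast
    ring
noncomputable def P (m : ℕ) : Polynomial ℝ := derivative^[m] ((X^2 - 1)^m)

lemma base_id (m : ℕ) :
    (X^2 - 1) * derivative ((X^2 - 1)^m) = C (2*(m:ℝ)) * (X * (X^2 - 1)^m) := by
  cases m with
  | zero => simp
  | succ k =>
    rw [derivative_pow]
    simp only [derivative_sub, derivative_one, derivative_X_pow, map_mul, map_ofNat, map_natCast]
    push_cast
    rw [pow_succ]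
    ring

lemma legendre_ode (m : ℕ) :
    (X^2 - 1) * derivative (derivative (P m)) + C 2 * (X * derivative (P m))
      = C ((m:ℝ)*((m:ℝ)+1)) * P m := by
  cases m with
  | zero => simp [P]
  | succ k =>
    have h := congrArg (derivative^[k+2]) (base_id (k+1))
    rw [leib2 (derivative ((X^2-1)^(k+1))) k, iterate_derivative_C_mul, leib1 _ (k+1)] at h
    have e1 : ∀ j : ℕ, derivative^[j] (derivative ((X^2-1 : Polynomial ℝ)^(k+1))) = derivative^[j+1] ((X^2-1 : Polynomial ℝ)^(k+1)) := by
      intro j; rw [← Function.iterate_succ_apply derivative j]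
    rw [e1 (k+2), e1 (k+1), e1 k] at h
    have hP : P (k+1) = derivative^[k+1] ((X^2-1)^(k+1)) := rfl
    have hP1 : derivative (P (k+1)) = derivative^[k+1+1] ((X^2-1)^(k+1)) := by
      rw [hP, ← Function.iterate_succ_apply' derivative (k+1)]
    have hP2 : derivative (derivative (P (k+1))) = derivative^[k+2+1] ((X^2-1)^(k+1)) := by
      rw [hP1, ← Function.iterate_succ_apply' derivative (k+2)]
    rw [hP2, hP1, hP]
    simp only [map_mul, map_add, map_one, map_ofNat, map_natCast] at h ⊢
    push_cast at h ⊢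
    linear_combination h
noncomputable def G (n : ℕ) : Polynomial ℝ := derivative (P (n+1))

noncomputable def Lop (q : Polynomial ℝ) : Polynomial ℝ :=
  C 4 * X * derivative q - (1 - X^2) * derivative (derivative q)

lemma eig (n : ℕ) : Lop (G n) = C ((n:ℝ)*((n:ℝ)+3)) * G n := by
  have h := congrArg derivative (legendre_ode (n+1))
  simp only [derivative_add, derivative_mul, derivative_sub, derivative_one, derivative_X,
    derivative_pow, derivative_X_pow, derivative_C, derivative_zero, derivative_natCast,
    derivative_ofNat, map_mul, map_add, map_one, map_ofNat, map_natCast] at h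
  simp only [Lop, G, map_mul, map_add, map_one, map_ofNat, map_natCast]
  push_cast at h ⊢
  linear_combination h
lemma f_natDegree (n : ℕ) : ((X^2 - 1 : Polynomial ℝ)^(n+1)).natDegree = 2*(n+1) := by
  rw [natDegree_pow]
  have : (X^2 - 1 : Polynomial ℝ) = X^2 - C 1 := by rw [map_one]
  rw [this, natDegree_X_pow_sub_C]
  ring

lemma f_monic (n : ℕ) : ((X^2 - 1 : Polynomial ℝ)^(n+1)).Monic := by
  have : (X^2 - 1 : Polynomial ℝ) = X^2 - C 1 := by rw [map_one]
  rw [this]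
  exact (monic_X_pow_sub_C (1:ℝ) (n := 2) two_ne_zero).pow _

lemma G_eq (n : ℕ) : G n = derivative^[n+2] ((X^2 - 1 : Polynomial ℝ)^(n+1)) := by
  have : G n = derivative^[n+1+1] ((X^2 - 1 : Polynomial ℝ)^(n+1)) := by
    rw [G, P, ← Function.iterate_succ_apply' derivative (n+1)]
  rw [this]

lemma G_deg (n : ℕ) : (G n).natDegree ≤ n := by
  rw [G_eq]
  refine (natDegree_iterate_derivative _ _).trans ?_
  rw [f_natDegree]
  omega

lemma G_coeff_ne (n : ℕ) : (G n).coeff n ≠ 0 := by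
  rw [G_eq, coeff_iterate_derivative]
  have h1 : n + (n + 2) = ((X^2 - 1 : Polynomial ℝ)^(n+1)).natDegree := by
    rw [f_natDegree]; omega
  rw [h1, (f_monic n).coeff_natDegree]
  simp only [nsmul_eq_mul, mul_one]
  refine Nat.cast_ne_zero.mpr (Nat.pos_of_ne_zero ?_).ne'
  intro h
  have := Nat.descFactorial_eq_zero_iff_lt.mp h
  omega
noncomputable def ip (q r : Polynomial ℝ) : ℝ := J ((1 - X^2) * q * r)
noncomputable def Bf (q r : Polynomial ℝ) : ℝ := J ((1 - X^2)^2 * derivative q * derivative r)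
lemma J_zero : J 0 = 0 := by simp [J]

lemma ibp (q r : Polynomial ℝ) : Bf q r = ip (Lop q) r := by
  have key : (1 - X^2 : Polynomial ℝ)^2 * derivative q * derivative r
      = derivative ((1 - X^2)^2 * derivative q * r) + (1 - X^2) * Lop q * r := by
    simp only [Lop, derivative_mul, derivative_pow, derivative_sub, derivative_one,
      derivative_X_pow, derivative_X, derivative_C, derivative_zero, derivative_one,
      map_add, map_mul, map_one, map_ofNat, map_natCast]
    push_cast
    ring
  rw [Bf, ip, key, J_add, J_deriv]
  have e1 : eval 1 ((1 - X^2 : Polynomial ℝ)^2 * derivative q * r) = 0 := by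
    simp [eval_mul, eval_pow]
  have e2 : eval (-1) ((1 - X^2 : Polynomial ℝ)^2 * derivative q * r) = 0 := by
    simp [eval_mul, eval_pow]
  rw [e1, e2]
  ring

lemma ip_symm (q r : Polynomial ℝ) : ip q r = ip r q := by
  unfold ip; congr 1; ring

lemma Bf_symm (q r : Polynomial ℝ) : Bf q r = Bf r q := by
  unfold Bf; congr 1; ring

lemma ibp' (q r : Polynomial ℝ) : ip (Lop q) r = ip (Lop r) q := by
  rw [← ibp, Bf_symm, ibp]

lemma ip_add_right (q r s : Polynomial ℝ) : ip q (r + s) = ip q r + ip q s := by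
  unfold ip; rw [← J_add]; congr 1; ring

lemma ip_smul_right (a : ℝ) (q r : Polynomial ℝ) : ip q (C a * r) = a * ip q r := by
  unfold ip; rw [← J_Cmul]; congr 1; ring

lemma ip_add_left (q r s : Polynomial ℝ) : ip (q + r) s = ip q s + ip r s := by
  rw [ip_symm, ip_add_right, ip_symm s q, ip_symm s r]

lemma ip_smul_left (a : ℝ) (q r : Polynomial ℝ) : ip (C a * q) r = a * ip q r := by
  rw [ip_symm, ip_smul_right, ip_symm]

lemma ip_zero_right (q : Polynomial ℝ) : ip q 0 = 0 := by
  unfold ip; rw [mul_zero, J_zero]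

lemma ip_self_nonneg (q : Polynomial ℝ) : 0 ≤ ip q q := by
  unfold ip J
  apply intervalIntegral.integral_nonneg (by norm_num)
  intro x hx
  simp only [Set.mem_Icc] at hx
  simp only [eval_mul, eval_sub, eval_one, eval_pow, eval_X]
  have hw : (0:ℝ) ≤ 1 - x^2 := by nlinarith [hx.1, hx.2]
  have : (1 - x^2) * eval x q * eval x q = (1 - x^2) * (eval x q)^2 := by ring
  rw [this]
  exact mul_nonneg hw (sq_nonneg _)

lemma Lop_add (f g : Polynomial ℝ) : Lop (f + g) = Lop f + Lop g := by
  simp only [Lop, derivative_add]; ring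

lemma Lop_smul (a : ℝ) (f : Polynomial ℝ) : Lop (C a * f) = C a * Lop f := by
  simp only [Lop, derivative_mul, derivative_C, zero_mul, zero_add]; ring

lemma GG_orth {n m : ℕ} (h : m < n) : ip (G n) (G m) = 0 := by
  have h1 := ibp' (G n) (G m)
  rw [eig, eig, ip_smul_left, ip_smul_left, ip_symm (G m) (G n)] at h1
  have hmn : (m:ℝ) < (n:ℝ) := by exact_mod_cast h
  have hne : (n:ℝ)*((n:ℝ)+3) ≠ (m:ℝ)*((m:ℝ)+3) := by nlinarith
  by_contra hip
  exact hne (mul_right_cancel₀ hip h1)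

lemma deg_drop {s : Polynomial ℝ} {d : ℕ} (h1 : s.natDegree ≤ d + 1)
    (h2 : s.coeff (d+1) = 0) : s.natDegree ≤ d := by
  rw [natDegree_le_iff_coeff_eq_zero] at h1 ⊢
  intro m hm
  by_cases hmd : m = d + 1
  · subst hmd; exact h2
  · exact h1 m (by omega)

lemma decomp (d : ℕ) (r : Polynomial ℝ) (h : r.natDegree ≤ d) :
    ∃ b s, r = C b * G d + s ∧ s.natDegree ≤ d ∧ s.coeff d = 0 := by
  refine ⟨r.coeff d / (G d).coeff d, r - C (r.coeff d / (G d).coeff d) * G d, by ring, ?_, ?_⟩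
  · refine (natDegree_sub_le _ _).trans (max_le h ?_)
    exact (natDegree_C_mul_le _ _).trans (G_deg d)
  · rw [coeff_sub, coeff_C_mul, div_mul_cancel₀ _ (G_coeff_ne d), sub_self]
lemma orth : ∀ d n (r : Polynomial ℝ), d < n → r.natDegree ≤ d → ip (G n) r = 0 := by
  intro d
  induction d with
  | zero =>
    intro n r hn hr
    obtain ⟨b, s, hrs, hs1, hs2⟩ := decomp 0 r hr
    have hs0 : s = 0 := by
      have := Polynomial.eq_C_of_natDegree_le_zero hs1
      rw [this, hs2, map_zero]
    rw [hrs, hs0, add_zero, ip_smul_right, GG_orth hn, mul_zero]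
  | succ d ih =>
    intro n r hn hr
    obtain ⟨b, s, hrs, hs1, hs2⟩ := decomp (d+1) r hr
    have hs' : s.natDegree ≤ d := deg_drop hs1 hs2
    rw [hrs, ip_add_right, ip_smul_right, GG_orth hn, mul_zero, zero_add]
    exact ih n s (by omega) hs'

lemma spec : ∀ p (q : Polynomial ℝ), q.natDegree ≤ p →
    Bf q q ≤ ((p:ℝ)*((p:ℝ)+3)) * ip q q := by
  intro p
  induction p with
  | zero =>
    intro q hq
    have hD : derivative q = 0 := by
      rw [Polynomial.eq_C_of_natDegree_le_zero hq, derivative_C]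
    have : Bf q q = 0 := by rw [Bf, hD, mul_zero, J_zero]
    rw [this]
    simp only [Nat.cast_zero, zero_mul, zero_add]
    norm_num
  | succ p ih =>
    intro q hq
    obtain ⟨b, s, hqs, hs1, hs2⟩ := decomp (p+1) q hq
    have hs' : s.natDegree ≤ p := deg_drop hs1 hs2
    set lam : ℝ := ((p:ℝ)+1)*(((p:ℝ)+1)+3) with hlam
    have heig : Lop (G (p+1)) = C lam * G (p+1) := by
      rw [eig]
      congr 2
      push_cast
      ring
    have hGs : ip (G (p+1)) s = 0 := orth p (p+1) s (by omega) hs'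
    -- expand Bf q q
    have hBf : Bf q q = lam * (b^2 * ip (G (p+1)) (G (p+1))) + Bf s s := by
      rw [ibp, hqs, Lop_add, Lop_smul, ip_add_left, ip_smul_left, heig, ip_smul_left]
      have h1 : ip (G (p+1)) (C b * G (p+1) + s)
          = b * ip (G (p+1)) (G (p+1)) := by
        rw [ip_add_right, ip_smul_right, hGs, add_zero]
      have h3 : ip (Lop s) (G (p+1)) = 0 := by
        rw [ibp' s (G (p+1)), heig, ip_smul_left, hGs, mul_zero]
      have h2 : ip (Lop s) (C b * G (p+1) + s) = Bf s s := by
        rw [ip_add_right, ip_smul_right, h3, mul_zero, zero_add, ← ibp]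
      rw [h1, h2]
      ring
    have hip : ip q q = b^2 * ip (G (p+1)) (G (p+1)) + ip s s := by
      have e2 : ip (C b * G (p+1)) s = 0 := by rw [ip_smul_left, hGs, mul_zero]
      have e3 : ip s (C b * G (p+1)) = 0 := by rw [ip_symm]; exact e2
      rw [hqs, ip_add_left, ip_add_right, ip_add_right, e2, e3, ip_smul_left, ip_smul_right]
      ring
    have hBs := ih s hs'
    have hss0 := ip_self_nonneg s
    have hGG0 := ip_self_nonneg (G (p+1))
    have hlam_ge : ((p:ℝ)*((p:ℝ)+3)) ≤ lam := by rw [hlam]; nlinarith [Nat.cast_nonneg (α := ℝ) p]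
    have hcast : ((p+1 : ℕ):ℝ)*(((p+1 : ℕ):ℝ)+3) = lam := by push_cast; rw [hlam]
    rw [hBf, hip, hcast]
    nlinarith [sq_nonneg b, Nat.cast_nonneg (α := ℝ) p]
theorem stmt_7 :
    ∃ c > 0, ∀ (p : ℕ) (q : Polynomial ℝ), q.natDegree ≤ p →
      Real.sqrt (∫ x in (-1:ℝ)..1, ((1 - x^2) * q.derivative.eval x)^2)
        ≤ c * ((p : ℝ) + 1) * Real.sqrt (∫ x in (-1:ℝ)..1, (1 - x^2) * (q.eval x)^2) := by
  refine ⟨2, by norm_num, ?_⟩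
  intro p q h
  have h1 : (∫ x in (-1:ℝ)..1, ((1 - x^2) * q.derivative.eval x)^2) = Bf q q := by
    rw [Bf, J]
    apply intervalIntegral.integral_congr
    intro x hx
    simp only [eval_mul, eval_pow, eval_sub, eval_one, eval_X]
    ring
  have h2 : (∫ x in (-1:ℝ)..1, (1 - x^2) * (q.eval x)^2) = ip q q := by
    rw [ip, J]
    apply intervalIntegral.integral_congr
    intro x hx
    simp only [eval_mul, eval_sub, eval_one, eval_pow, eval_X]
    ring
  rw [h1, h2]
  have h3 := spec p q h
  have h4 := ip_self_nonneg q
  have h5 : Bf q q ≤ (2*((p:ℝ)+1))^2 * ip q q := by nlinarith [mul_nonneg (sq_nonneg ((p:ℝ))) h4, mul_nonneg (Nat.cast_nonneg (α := ℝ) p) h4]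
  calc Real.sqrt (Bf q q) ≤ Real.sqrt ((2*((p:ℝ)+1))^2 * ip q q) := Real.sqrt_le_sqrt h5
    _ = 2*((p:ℝ)+1)*Real.sqrt (ip q q) := by
        rw [Real.sqrt_mul (by positivity), Real.sqrt_sq (by positivity)]
end

section
/- Let a < b and let b_{[a,b]}(x) = (x-a)(b-x)/(b-a)² be the quadratic bubble function on [a,b]. Then there exists a constant c > 0 independent of p and of a, b such that for every polynomial q of degree at most p, ‖(b_{[a,b]} q)'‖_{L²(a,b)} ≤ c · (p+1)/(b-a) · ‖b_{[a,b]}^{1/2} q‖_{L²(a,b)}. -/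
open MeasureTheory Polynomial

namespace Stmt8

noncomputable def Phi (f : ℝ[X]) : ℝ := ∫ x in (-1:ℝ)..1, f.eval x

lemma phi_ii (f : ℝ[X]) : IntervalIntegrable (fun x => f.eval x) volume (-1) 1 :=
  (f.continuous_aeval).intervalIntegrable _ _

lemma Phi_add (f g : ℝ[X]) : Phi (f + g) = Phi f + Phi g := by
  unfold Phi
  simp only [eval_add]
  exact intervalIntegral.integral_add (phi_ii f) (phi_ii g)

lemma Phi_smul (c : ℝ) (f : ℝ[X]) : Phi (c • f) = c * Phi f := by
  unfold Phi
  simp only [eval_smul, smul_eq_mul]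
  exact intervalIntegral.integral_const_mul c _

lemma Phi_sum {ι : Type*} (s : Finset ι) (f : ι → ℝ[X]) :
    Phi (∑ i ∈ s, f i) = ∑ i ∈ s, Phi (f i) := by
  unfold Phi
  simp only [eval_finset_sum]
  exact intervalIntegral.integral_finset_sum (fun i _ => phi_ii (f i))

lemma Phi_nonneg {f : ℝ[X]} (h : ∀ x ∈ Set.Icc (-1:ℝ) 1, 0 ≤ f.eval x) : 0 ≤ Phi f := by
  apply intervalIntegral.integral_nonneg (by norm_num)
  exact h

lemma Phi_derivative (f : ℝ[X]) : Phi (derivative f) = f.eval 1 - f.eval (-1) := by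
  unfold Phi
  apply intervalIntegral.integral_deriv_eq_sub' (fun x => f.eval x)
  · funext x; exact f.deriv
  · exact fun x _ => f.differentiableAt
  · exact (derivative f).continuous_aeval.continuousOn


noncomputable def L (g : ℝ[X]) : ℝ[X] := derivative ((1 - X^2) * derivative g)

lemma prod_rule (f g : ℝ[X]) :
    derivative ((1 - X^2) * f * derivative g)
      = (1 - X^2) * derivative f * derivative g + f * L g := by
  unfold L
  simp only [derivative_mul, derivative_one, derivative_X_pow, derivative_sub]
  ring

lemma coeff_L (g : ℝ[X]) (m : ℕ) :
    (L g).coeff m = (m+1)*(m+2)*g.coeff (m+2) - m*(m+1)*g.coeff m := by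
  unfold L
  rw [sub_mul, one_mul, derivative_sub, coeff_sub, coeff_derivative, coeff_derivative,
    mul_comm ((X:ℝ[X])^2), coeff_derivative, coeff_mul_X_pow', coeff_derivative]
  rcases Nat.eq_zero_or_pos m with hm | hm
  · subst hm; norm_num; ring
  · rw [if_pos (by omega)]
    have h2 : m + 1 - 2 = m - 1 := by omega
    rw [h2]
    have h3 : m - 1 + 1 = m := by omega
    rw [h3]
    have h4 : ((m - 1 : ℕ) : ℝ) = (m:ℝ) - 1 := by
      rw [Nat.cast_sub hm]; norm_num
    rw [h4]
    push_cast
    ring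

lemma natDegree_L_le (g : ℝ[X]) : (L g).natDegree ≤ g.natDegree := by
  rw [natDegree_le_iff_coeff_eq_zero]
  intro m hm
  rw [coeff_L, coeff_eq_zero_of_natDegree_lt (by omega), coeff_eq_zero_of_natDegree_lt (by omega)]
  ring


lemma ibp (f g : ℝ[X]) : Phi ((1 - X^2) * derivative f * derivative g) = - Phi (f * L g) := by
  have h := Phi_derivative ((1 - X^2) * f * derivative g)
  rw [prod_rule] at h
  rw [Phi_add] at h
  have e1 : ((1 - X^2 : ℝ[X]) * f * derivative g).eval 1 = 0 := by simp
  have e2 : ((1 - X^2 : ℝ[X]) * f * derivative g).eval (-1) = 0 := by simp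
  rw [e1, e2] at h
  linarith

lemma selfadj (f g : ℝ[X]) : Phi (f * L g) = Phi (g * L f) := by
  have h1 := ibp f g
  have h2 := ibp g f
  rw [show (1 - X^2 : ℝ[X]) * derivative g * derivative f
      = (1 - X^2) * derivative f * derivative g by ring] at h2
  have := h1.symm.trans h2
  linarith

noncomputable def R (n : ℕ) : ℝ[X] := derivative^[n] ((X^2 - 1)^n)

lemma vanish (n j : ℕ) (hj : j < n) :
    ∃ S : ℝ[X], derivative^[j] ((X^2 - 1 : ℝ[X])^n) = (X^2 - 1)^(n - j) * S := by
  induction j with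
  | zero => exact ⟨1, by simp⟩
  | succ j ih =>
    obtain ⟨S, hS⟩ := ih (by omega)
    refine ⟨((n - j : ℕ) : ℝ[X]) * (2 * X) * S + (X^2 - 1) * derivative S, ?_⟩
    rw [Function.iterate_succ_apply', hS]
    rw [derivative_mul, derivative_pow]
    have hnj : n - j = (n - (j+1)) + 1 := by omega
    rw [hnj]
    simp only [derivative_sub, derivative_one, derivative_X_pow, map_add, map_one,
      Polynomial.C_eq_natCast]
    push_cast
    ring


lemma eval_vanish (n j : ℕ) (hj : j < n) (x : ℝ) (hx : x^2 = 1) :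
    (derivative^[j] ((X^2 - 1 : ℝ[X])^n)).eval x = 0 := by
  obtain ⟨S, hS⟩ := vanish n j hj
  rw [hS, eval_mul, eval_pow, eval_sub, eval_one, eval_pow, eval_X, hx, sub_self,
    zero_pow (by omega), zero_mul]

lemma ibp_step (W f : ℝ[X]) (h1 : W.eval 1 = 0) (h2 : W.eval (-1) = 0) :
    Phi (derivative W * f) = - Phi (W * derivative f) := by
  have h := Phi_derivative (W * f)
  rw [derivative_mul, Phi_add, eval_mul, eval_mul, h1, h2, zero_mul, zero_mul, sub_zero] at h
  linarith

lemma ibp_iter (n : ℕ) : ∀ k ≤ n, ∀ f : ℝ[X],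
    Phi (derivative^[k] ((X^2 - 1 : ℝ[X])^n) * f)
      = (-1)^k * Phi ((X^2 - 1 : ℝ[X])^n * derivative^[k] f) := by
  intro k
  induction k with
  | zero => intro _ f; simp
  | succ k ih =>
    intro hk f
    rw [Function.iterate_succ_apply', ibp_step _ _ (eval_vanish n k (by omega) 1 (by norm_num))
      (eval_vanish n k (by omega) (-1) (by norm_num)), ih (by omega), Function.iterate_succ_apply]
    ring

lemma orth (n : ℕ) (f : ℝ[X]) (hf : f.natDegree < n) : Phi (R n * f) = 0 := by
  unfold R
  rw [ibp_iter n n le_rfl f, iterate_derivative_eq_zero hf, mul_zero]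
  have : Phi 0 = 0 := by unfold Phi; simp
  rw [this, mul_zero]

lemma natDegree_R_le (n : ℕ) : (R n).natDegree ≤ n := by
  have h := natDegree_iterate_derivative ((X^2 - 1 : ℝ[X])^n) n
  have h2 : ((X^2 - 1 : ℝ[X])^n).natDegree ≤ 2*n := by
    refine le_trans (natDegree_pow_le) ?_
    have : (X^2 - 1 : ℝ[X]).natDegree ≤ 2 := by
      compute_degree
    nlinarith
  unfold R
  omega

lemma coeff_R (n : ℕ) : (R n).coeff n = ((2*n).descFactorial n : ℝ) := by
  unfold R
  rw [coeff_iterate_derivative]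
  have hm : Polynomial.Monic ((X^2 - 1 : ℝ[X])^n) := by
    apply Polynomial.Monic.pow
    have : (X^2 - 1 : ℝ[X]) = X^2 - C 1 := by simp
    rw [this]
    exact monic_X_pow_sub_C 1 (by norm_num)
  have hdeg : ((X^2 - 1 : ℝ[X])^n).natDegree = 2*n := by
    have hm1 : Polynomial.Monic (X^2 - 1 : ℝ[X]) := by
      have : (X^2 - 1 : ℝ[X]) = X^2 - C 1 := by simp
      rw [this]
      exact monic_X_pow_sub_C 1 (by norm_num)
    rw [hm1.natDegree_pow]
    have : (X^2 - 1 : ℝ[X]) = X^2 - C 1 := by simp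
    rw [this, natDegree_X_pow_sub_C]
    ring
  have : n + n = 2*n := by ring
  rw [this, ← hdeg, hm.coeff_natDegree]
  simp [hdeg, this]

lemma coeff_R_ne (n : ℕ) : (R n).coeff n ≠ 0 := by
  rw [coeff_R]
  have : ¬ ((2*n).descFactorial n = 0) := by
    rw [Nat.descFactorial_eq_zero_iff_lt]; omega
  have : 0 < (2*n).descFactorial n := Nat.pos_of_ne_zero this
  positivity


lemma Phi_zero : Phi 0 = 0 := by unfold Phi; simp

lemma sq_zero (f : ℝ[X]) (h : Phi (f * f) = 0) : f = 0 := by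
  by_contra hf
  have hroots : Set.Finite {x : ℝ | f.IsRoot x} := f.finite_setOf_isRoot hf
  have hInt : Integrable (fun x => f.eval x * f.eval x)
      (volume.restrict (Set.Ioc (-1:ℝ) 1)) := by
    apply Continuous.integrableOn_Ioc
    exact f.continuous_aeval.mul f.continuous_aeval
  have h2 : ∫ x in Set.Ioc (-1:ℝ) 1, f.eval x * f.eval x = 0 := by
    have := h
    unfold Phi at this
    rw [intervalIntegral.integral_of_le (by norm_num)] at this
    simp only [eval_mul] at this
    exact this
  have h3 := (MeasureTheory.integral_eq_zero_iff_of_nonneg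
      (fun x => mul_self_nonneg (f.eval x)) hInt).mp h2
  have h4 : ∀ᵐ x ∂(volume.restrict (Set.Ioc (-1:ℝ) 1)), x ∈ {x : ℝ | f.IsRoot x} := by
    filter_upwards [h3] with x hx
    have : f.eval x * f.eval x = 0 := hx
    have : f.eval x = 0 := by nlinarith [sq_nonneg (f.eval x)]
    exact this
  have h5 : (volume.restrict (Set.Ioc (-1:ℝ) 1)) {x : ℝ | f.IsRoot x}ᶜ = 0 := by
    rwa [MeasureTheory.ae_iff] at h4
  rw [Measure.restrict_apply hroots.measurableSet.compl] at h5
  have h6 : volume (Set.Ioc (-1:ℝ) 1) ≤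
      volume ({x : ℝ | f.IsRoot x}ᶜ ∩ Set.Ioc (-1:ℝ) 1) + volume {x : ℝ | f.IsRoot x} := by
    refine le_trans (measure_mono ?_) (measure_union_le _ _)
    intro x hx
    by_cases hr : f.IsRoot x
    · exact Or.inr hr
    · exact Or.inl ⟨hr, hx⟩
  rw [h5, hroots.measure_zero, zero_add] at h6
  simp [Real.volume_Ioc] at h6
  norm_num at h6

lemma ode (n : ℕ) : L (R n) = ((-((n:ℝ)*(n+1))) : ℝ) • R n := by
  set v := L (R n) + (((n:ℝ)*((n:ℝ)+1)) : ℝ) • R n with hv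
  have hcoeff : ∀ m, n ≤ m → v.coeff m = 0 := by
    intro m hm
    rw [hv, coeff_add, coeff_smul, coeff_L]
    have e2 : (R n).coeff (m+2) = 0 :=
      coeff_eq_zero_of_natDegree_lt (lt_of_le_of_lt (natDegree_R_le n) (by omega))
    rcases eq_or_lt_of_le hm with heq | hlt
    · subst heq; rw [e2]; push_cast [smul_eq_mul]; ring
    · have e1 : (R n).coeff m = 0 :=
        coeff_eq_zero_of_natDegree_lt (lt_of_le_of_lt (natDegree_R_le n) hlt)
      rw [e1, e2]; simp
  have horth : ∀ f : ℝ[X], f.natDegree < n → Phi (v * f) = 0 := by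
    intro f hfn
    have expand : v * f = f * L (R n) + ((n:ℝ)*((n:ℝ)+1)) • (R n * f) := by
      rw [hv]; ring_nf; rw [smul_mul_assoc]
    rw [expand, Phi_add, Phi_smul, selfadj, orth n f hfn, mul_zero, add_zero]
    have : natDegree (L f) < n := lt_of_le_of_lt (natDegree_L_le f) hfn
    have := orth n (L f) this
    rw [show R n * L f = L f * R n from mul_comm _ _] at this ⊢
    exact this
  have hvz : v = 0 := by
    rcases Nat.eq_zero_or_pos n with hn | hn
    · ext m; rw [hcoeff m (by omega)]; simp
    · by_contra hvne
      have hdeg : v.natDegree < n := by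
        have : v.natDegree ≤ n - 1 := by
          rw [natDegree_le_iff_coeff_eq_zero]
          intro m hm; exact hcoeff m (by omega)
        omega
      have := horth v hdeg
      exact hvne (sq_zero v this)
  have : L (R n) = -((((n:ℝ)*((n:ℝ)+1))) • R n) := by
    rw [← add_eq_zero_iff_eq_neg] at *
    exact hvz
  rw [this, ← neg_smul]


lemma coeff_D (k : ℕ) : (derivative (R (k+1))).coeff k = (R (k+1)).coeff (k+1) * (k+1) := by
  simp [coeff_derivative]

lemma coeff_D_ne (k : ℕ) : (derivative (R (k+1))).coeff k ≠ 0 := by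
  rw [coeff_D]
  exact mul_ne_zero (coeff_R_ne (k+1)) (by positivity)

lemma natDegree_D_le (k : ℕ) : (derivative (R (k+1))).natDegree ≤ k := by
  have h1 := natDegree_derivative_le (R (k+1))
  have h2 := natDegree_R_le (k+1)
  omega

lemma span : ∀ n : ℕ, ∀ q : ℝ[X], (∀ m, n ≤ m → q.coeff m = 0) →
    ∃ a : ℕ → ℝ, q = ∑ k ∈ Finset.range n, a k • derivative (R (k+1)) := by
  intro n
  induction n with
  | zero =>
    intro q hq
    refine ⟨fun _ => 0, ?_⟩
    simp only [Finset.range_zero, Finset.sum_empty]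
    ext m; exact hq m (by omega)
  | succ n ih =>
    intro q hq
    set c := q.coeff n / (derivative (R (n+1))).coeff n with hc
    have hside : ∀ m, n ≤ m → (q - c • derivative (R (n+1))).coeff m = 0 := by
      intro m hm
      rcases eq_or_lt_of_le hm with heq | hlt
      · rw [coeff_sub, coeff_smul, ← heq, hc, smul_eq_mul,
          div_mul_cancel₀ _ (coeff_D_ne n), sub_self]
      · rw [coeff_sub, coeff_smul, hq m (by omega), smul_eq_mul]
        rw [coeff_eq_zero_of_natDegree_lt (lt_of_le_of_lt (natDegree_D_le n) (by omega))]
        ring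
    obtain ⟨a, ha⟩ := ih (q - c • derivative (R (n+1))) hside
    refine ⟨fun k => if k = n then c else a k, ?_⟩
    rw [Finset.sum_range_succ]
    simp only [if_pos, if_neg]
    have h2 : ∑ k ∈ Finset.range n, (if k = n then c else a k) • derivative (R (k+1))
        = ∑ k ∈ Finset.range n, a k • derivative (R (k+1)) := by
      apply Finset.sum_congr rfl
      intro k hk
      rw [if_neg (by simp at hk; omega)]
    rw [h2, ← ha]
    ring

lemma orthP {j k : ℕ} (h : j ≠ k) : Phi (R (j+1) * R (k+1)) = 0 := by
  rcases lt_or_gt_of_ne h with hlt | hlt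
  · rw [mul_comm]
    exact orth (k+1) (R (j+1)) (lt_of_le_of_lt (natDegree_R_le _) (by omega))
  · exact orth (j+1) (R (k+1)) (lt_of_le_of_lt (natDegree_R_le _) (by omega))

lemma nu_nonneg (k : ℕ) : 0 ≤ Phi (R (k+1) * R (k+1)) := by
  apply Phi_nonneg
  intro x _
  rw [eval_mul]
  exact mul_self_nonneg _


lemma diag (n : ℕ) (c : ℕ → ℝ) :
    Phi ((∑ k ∈ Finset.range n, c k • R (k+1)) * (∑ k ∈ Finset.range n, c k • R (k+1)))
      = ∑ k ∈ Finset.range n, (c k)^2 * Phi (R (k+1) * R (k+1)) := by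
  rw [Finset.sum_mul_sum, Phi_sum]
  have step : ∀ j ∈ Finset.range n,
      Phi (∑ k ∈ Finset.range n, (c j • R (j+1)) * (c k • R (k+1)))
        = (c j)^2 * Phi (R (j+1) * R (j+1)) := by
    intro j hj
    rw [Phi_sum]
    rw [Finset.sum_eq_single_of_mem j hj]
    · rw [smul_mul_smul_comm, Phi_smul]; ring
    · intro k _ hk
      rw [smul_mul_smul_comm, Phi_smul, orthP (fun h => hk (h.symm)), mul_zero]
  exact Finset.sum_congr rfl step

lemma key (p : ℕ) (q : ℝ[X]) (hq : q.natDegree ≤ p) :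
    Phi (derivative ((1 - X^2) * q) * derivative ((1 - X^2) * q))
      ≤ ((p:ℝ)+1) * ((p:ℝ)+2) * Phi ((1 - X^2) * q * q) := by
  set n := p + 1 with hn
  obtain ⟨a, ha⟩ := span n q (fun m hm => coeff_eq_zero_of_natDegree_lt (by omega))
  set ν : ℕ → ℝ := fun k => Phi (R (k+1) * R (k+1)) with hν
  set b : ℕ → ℝ := fun k => a k * (((k:ℝ)+1) * ((k:ℝ)+2)) with hb
  -- Step A
  have hu : (1 - X^2 : ℝ[X]) * q = ∑ k ∈ Finset.range n, a k • ((1 - X^2) * derivative (R (k+1))) := by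
    rw [ha, Finset.mul_sum]
    exact Finset.sum_congr rfl (fun k _ => (mul_smul_comm _ _ _))
  have hdu : derivative ((1 - X^2 : ℝ[X]) * q) = ∑ k ∈ Finset.range n, (-(b k)) • R (k+1) := by
    rw [hu, derivative_sum]
    apply Finset.sum_congr rfl
    intro k _
    rw [derivative_smul]
    have : derivative ((1 - X^2 : ℝ[X]) * derivative (R (k+1))) = L (R (k+1)) := rfl
    rw [this, ode (k+1), smul_smul, hb]
    push_cast
    ring_nf
  -- Step B
  have hB : Phi (derivative ((1 - X^2 : ℝ[X]) * q) * derivative ((1 - X^2) * q))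
      = ∑ k ∈ Finset.range n, (b k)^2 * ν k := by
    rw [hdu, diag]
    exact Finset.sum_congr rfl (fun k _ => by rw [neg_sq])
  -- Step C
  have hC : Phi ((1 - X^2 : ℝ[X]) * q * q) = ∑ k ∈ Finset.range n, a k * b k * ν k := by
    have hqq : (1 - X^2 : ℝ[X]) * q * q
        = ∑ j ∈ Finset.range n, ∑ k ∈ Finset.range n,
            (a j * a k) • ((1 - X^2) * derivative (R (j+1)) * derivative (R (k+1))) := by
      calc (1 - X^2 : ℝ[X]) * q * q
          = (∑ j ∈ Finset.range n, a j • ((1 - X^2) * derivative (R (j+1)))) * q := by rw [hu]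
        _ = _ := by
            rw [ha, Finset.sum_mul_sum]
            refine Finset.sum_congr rfl (fun j _ => Finset.sum_congr rfl (fun k _ => ?_))
            rw [smul_mul_smul_comm]
    rw [hqq, Phi_sum]
    have step : ∀ j ∈ Finset.range n,
        Phi (∑ k ∈ Finset.range n,
            (a j * a k) • ((1 - X^2 : ℝ[X]) * derivative (R (j+1)) * derivative (R (k+1))))
          = a j * b j * ν j := by
      intro j hj
      rw [Phi_sum]
      have term : ∀ k ∈ Finset.range n,
          Phi ((a j * a k) • ((1 - X^2 : ℝ[X]) * derivative (R (j+1)) * derivative (R (k+1))))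
            = (a j * a k) * (((k:ℝ)+1) * ((k:ℝ)+2)) * Phi (R (j+1) * R (k+1)) := by
        intro k _
        rw [Phi_smul, ibp, ode (k+1), mul_smul_comm, Phi_smul]
        push_cast
        ring
      rw [Finset.sum_congr rfl term]
      rw [Finset.sum_eq_single_of_mem j hj]
      · rw [hb, hν]; ring
      · intro k _ hk
        rw [orthP (fun h => hk (h.symm)), mul_zero]
    exact Finset.sum_congr rfl step
  rw [hB, hC, Finset.mul_sum]
  apply Finset.sum_le_sum
  intro k hk
  simp only [Finset.mem_range] at hk
  have hk' : (k:ℝ) ≤ (p:ℝ) := by exact_mod_cast (by omega : k ≤ p)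
  have hν0 : 0 ≤ ν k := nu_nonneg k
  have ht0 : (0:ℝ) ≤ ((k:ℝ)+1) * ((k:ℝ)+2) := by positivity
  have ht : ((k:ℝ)+1) * ((k:ℝ)+2) ≤ ((p:ℝ)+1) * ((p:ℝ)+2) := by nlinarith
  have hs : 0 ≤ (a k)^2 * ν k := mul_nonneg (sq_nonneg _) hν0
  have expand1 : (b k)^2 * ν k = ((a k)^2 * ν k) * (((k:ℝ)+1) * ((k:ℝ)+2)) * (((k:ℝ)+1) * ((k:ℝ)+2)) := by
    rw [hb]; ring
  have expand2 : ((p:ℝ)+1) * ((p:ℝ)+2) * (a k * b k * ν k)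
      = ((a k)^2 * ν k) * (((k:ℝ)+1) * ((k:ℝ)+2)) * (((p:ℝ)+1) * ((p:ℝ)+2)) := by
    rw [hb]; ring
  rw [expand1, expand2]
  exact mul_le_mul_of_nonneg_left ht (mul_nonneg hs ht0)


lemma subst (a b : ℝ) (hab : a < b) (f : ℝ[X]) :
    ∫ x in a..b, f.eval x
      = ((b-a)/2) * Phi (f.comp (C ((b-a)/2) * X + C ((a+b)/2))) := by
  have hc : (b-a)/2 ≠ 0 := by
    have : 0 < (b-a)/2 := by linarith
    exact ne_of_gt this
  have h1 : Phi (f.comp (C ((b-a)/2) * X + C ((a+b)/2)))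
      = ∫ t in (-1:ℝ)..1, f.eval (((b-a)/2) * t + (a+b)/2) := by
    unfold Phi
    apply intervalIntegral.integral_congr
    intro t _
    simp [eval_comp]
  rw [h1, intervalIntegral.integral_comp_mul_add (fun x => f.eval x) hc ((a+b)/2)]
  have e1 : (b-a)/2 * (-1) + (a+b)/2 = a := by ring
  have e2 : (b-a)/2 * 1 + (a+b)/2 = b := by ring
  rw [e1, e2, smul_eq_mul, ← mul_assoc, mul_inv_cancel₀ hc, one_mul]


end Stmt8

open Stmt8 in
theorem stmt_8 :
    ∃ c > 0, ∀ (a b : ℝ), a < b → ∀ (p : ℕ) (q : Polynomial ℝ), q.natDegree ≤ p →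
      Real.sqrt (∫ x in a..b,
          (deriv (fun y : ℝ => ((y - a) * (b - y) / (b - a)^2) * q.eval y) x)^2)
        ≤ c * ((p : ℝ) + 1) / (b - a) *
            Real.sqrt (∫ x in a..b, ((x - a) * (b - x) / (b - a)^2) * (q.eval x)^2) := by
  refine ⟨2, by norm_num, ?_⟩
  intro a b hab p q hq
  have hba : b - a ≠ 0 := by intro h; linarith [sub_pos.mpr hab]
  have hba' : (0:ℝ) < b - a := sub_pos.mpr hab
  set c2 : ℝ := (b-a)/2 with hc2def
  have hc2 : c2 ≠ 0 := by rw [hc2def]; positivity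
  have hc2pos : 0 < c2 := by rw [hc2def]; positivity
  set d : ℝ := (a+b)/2 with hddef
  set ψ : ℝ[X] := C c2 * X + C d with hψ
  set e : ℝ := ((b-a)^2)⁻¹ with hedef
  set B : ℝ[X] := C e * ((X - C a) * (C b - X)) with hB
  set Q : ℝ[X] := B * q with hQ
  set qc : ℝ[X] := q.comp ψ with hqc
  set D : ℝ[X] := derivative ((1 - X^2) * qc) with hD
  -- rewrite the integrands as polynomial evaluations
  have hfun : (fun y : ℝ => ((y - a) * (b - y) / (b - a)^2) * q.eval y)
      = fun y => Q.eval y := by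
    funext y
    simp only [hQ, hB, eval_mul, eval_C, eval_sub, eval_X]
    rw [hedef, div_eq_mul_inv]
    ring
  have hL : (∫ x in a..b,
        (deriv (fun y : ℝ => ((y - a) * (b - y) / (b - a)^2) * q.eval y) x)^2)
      = ∫ x in a..b, (derivative Q * derivative Q).eval x := by
    apply intervalIntegral.integral_congr
    intro x _
    dsimp only
    rw [hfun]
    rw [Polynomial.deriv (p := Q), eval_mul]
    ring
  have hR : (∫ x in a..b, ((x - a) * (b - x) / (b - a)^2) * (q.eval x)^2)
      = ∫ x in a..b, (B * (q * q)).eval x := by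
    apply intervalIntegral.integral_congr
    intro x _
    dsimp only
    simp only [hB, eval_mul, eval_C, eval_sub, eval_X]
    rw [hedef, div_eq_mul_inv]
    ring
  -- composition identities
  have hψderiv : derivative ψ = C c2 := by
    rw [hψ]
    simp [derivative_C_mul_X]
  have hψeval : ∀ t : ℝ, ψ.eval t = c2 * t + d := by
    intro t; rw [hψ]; simp
  have hBc : B.comp ψ = C (4:ℝ)⁻¹ * (1 - X^2) := by
    have h1 : (X - C a).comp ψ = C c2 * (X + 1) := by
      rw [sub_comp, X_comp, C_comp, hψ]
      have : (C d : ℝ[X]) - C a = C c2 := by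
        rw [← C_sub]; congr 1; rw [hddef, hc2def]; ring
      rw [show (C c2 * X + C d : ℝ[X]) - C a = C c2 * X + (C d - C a) by ring, this]
      ring
    have h2 : (C b - X).comp ψ = C c2 * (1 - X) := by
      rw [sub_comp, X_comp, C_comp, hψ]
      have : (C b : ℝ[X]) - C d = C c2 := by
        rw [← C_sub]; congr 1; rw [hddef, hc2def]; ring
      rw [show (C b : ℝ[X]) - (C c2 * X + C d) = (C b - C d) - C c2 * X by ring, this]
      ring
    rw [hB, mul_comp, mul_comp, C_comp, h1, h2]
    have hc : e * (c2 * c2) = (4:ℝ)⁻¹ := by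
      rw [hedef, hc2def]; field_simp; ring
    calc C e * (C c2 * (X + 1) * (C c2 * (1 - X)))
        = C (e * (c2 * c2)) * (1 - X^2) := by rw [C_mul, C_mul]; ring
      _ = C (4:ℝ)⁻¹ * (1 - X^2) := by rw [hc]
  have hQc : Q.comp ψ = C (4:ℝ)⁻¹ * ((1 - X^2) * qc) := by
    rw [hQ, mul_comp, hBc, hqc]; ring
  have hdQc : (derivative Q).comp ψ = (c2⁻¹ * (4:ℝ)⁻¹) • D := by
    have h1 : derivative (Q.comp ψ) = C c2 * (derivative Q).comp ψ := by
      rw [derivative_comp, hψderiv]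
    have h2 : derivative (Q.comp ψ) = C (4:ℝ)⁻¹ * D := by
      rw [hQc, derivative_C_mul, hD]
    have h3 : C c2 * (derivative Q).comp ψ = C (4:ℝ)⁻¹ * D := by rw [← h1, h2]
    have := congrArg (fun z => C c2⁻¹ * z) h3
    rw [← mul_assoc, ← C_mul, inv_mul_cancel₀ hc2, C_1, one_mul] at this
    rw [this, smul_eq_C_mul, C_mul]
    ring
  -- degree of qc
  have hqcdeg : qc.natDegree ≤ p := by
    rw [hqc]
    refine le_trans natDegree_comp_le ?_
    have hψdeg : ψ.natDegree ≤ 1 := by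
      rw [hψ]
      compute_degree
    calc q.natDegree * ψ.natDegree ≤ p * 1 := Nat.mul_le_mul hq hψdeg
      _ = p := by ring
  -- the two integrals via substitution
  have hLsub : (∫ x in a..b, (derivative Q * derivative Q).eval x)
      = c2 * ((c2⁻¹ * (4:ℝ)⁻¹) * (c2⁻¹ * (4:ℝ)⁻¹) * Phi (D * D)) := by
    rw [subst a b hab, mul_comp, hdQc, smul_mul_smul_comm, Phi_smul]
  have hRsub : (∫ x in a..b, (B * (q * q)).eval x)
      = c2 * ((4:ℝ)⁻¹ * Phi ((1 - X^2) * qc * qc)) := by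
    rw [subst a b hab, mul_comp, hBc, mul_comp, ← hqc]
    have : C (4:ℝ)⁻¹ * (1 - X^2) * (qc * qc) = C (4:ℝ)⁻¹ * ((1 - X^2) * qc * qc) := by ring
    rw [this, ← smul_eq_C_mul, Phi_smul]
  -- key inequality
  have hkey := key p qc hqcdeg
  rw [← hD] at hkey
  have hΦ0 : 0 ≤ Phi ((1 - X^2) * qc * qc) := by
    apply Phi_nonneg
    intro x hx
    simp only [eval_mul, eval_sub, eval_one, eval_pow, eval_X]
    have h1 : x^2 ≤ 1 := by
      rcases hx with ⟨hx1, hx2⟩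
      nlinarith
    nlinarith [sq_nonneg (qc.eval x)]
  -- final numeric comparison
  set Φ0 := Phi ((1 - X^2) * qc * qc) with hΦ0def
  set ΦD := Phi (D * D) with hΦDdef
  have hcompare : (∫ x in a..b, (derivative Q * derivative Q).eval x)
      ≤ ((p:ℝ)+1) * ((p:ℝ)+2) / (b-a)^2 * (∫ x in a..b, (B * (q * q)).eval x) := by
    rw [hLsub, hRsub]
    have hcoef : c2 * ((c2⁻¹ * (4:ℝ)⁻¹) * (c2⁻¹ * (4:ℝ)⁻¹)) * (((p:ℝ)+1) * ((p:ℝ)+2))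
        = ((p:ℝ)+1) * ((p:ℝ)+2) / (b-a)^2 * (c2 * (4:ℝ)⁻¹) := by
      rw [hc2def]; field_simp; ring
    calc c2 * ((c2⁻¹ * (4:ℝ)⁻¹) * (c2⁻¹ * (4:ℝ)⁻¹) * ΦD)
        = c2 * ((c2⁻¹ * (4:ℝ)⁻¹) * (c2⁻¹ * (4:ℝ)⁻¹)) * ΦD := by ring
      _ ≤ c2 * ((c2⁻¹ * (4:ℝ)⁻¹) * (c2⁻¹ * (4:ℝ)⁻¹)) * (((p:ℝ)+1) * ((p:ℝ)+2) * Φ0) := by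
          apply mul_le_mul_of_nonneg_left hkey
          positivity
      _ = ((p:ℝ)+1) * ((p:ℝ)+2) / (b-a)^2 * (c2 * ((4:ℝ)⁻¹ * Φ0)) := by
          linear_combination Φ0 * hcoef
  -- take square roots
  rw [hL, hR]
  set I := ∫ x in a..b, (B * (q * q)).eval x with hI
  have hInn : 0 ≤ I := by
    rw [hRsub]
    exact mul_nonneg (le_of_lt hc2pos) (mul_nonneg (by norm_num) hΦ0)
  have sqrt1 : Real.sqrt (∫ x in a..b, (derivative Q * derivative Q).eval x)
      ≤ Real.sqrt (((p:ℝ)+1) * ((p:ℝ)+2) / (b-a)^2 * I) := Real.sqrt_le_sqrt hcompare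
  have sqrt2 : Real.sqrt (((p:ℝ)+1) * ((p:ℝ)+2) / (b-a)^2 * I)
      = Real.sqrt (((p:ℝ)+1) * ((p:ℝ)+2) / (b-a)^2) * Real.sqrt I := by
    apply Real.sqrt_mul
    positivity
  have sqrt3 : Real.sqrt (((p:ℝ)+1) * ((p:ℝ)+2) / (b-a)^2) ≤ 2 * ((p:ℝ)+1) / (b-a) := by
    have h1 : ((p:ℝ)+1) * ((p:ℝ)+2) / (b-a)^2 ≤ (2 * ((p:ℝ)+1) / (b-a))^2 := by
      rw [div_pow]
      apply div_le_div_of_nonneg_right ?_ (by positivity)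
      · nlinarith [Nat.cast_nonneg (α := ℝ) p]
    calc Real.sqrt (((p:ℝ)+1) * ((p:ℝ)+2) / (b-a)^2)
        ≤ Real.sqrt ((2 * ((p:ℝ)+1) / (b-a))^2) := Real.sqrt_le_sqrt h1
      _ = 2 * ((p:ℝ)+1) / (b-a) := Real.sqrt_sq (by positivity)
  calc Real.sqrt (∫ x in a..b, (derivative Q * derivative Q).eval x)
      ≤ Real.sqrt (((p:ℝ)+1) * ((p:ℝ)+2) / (b-a)^2) * Real.sqrt I := by
        rw [← sqrt2]; exact sqrt1
    _ ≤ (2 * ((p:ℝ)+1) / (b-a)) * Real.sqrt I :=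
        mul_le_mul_of_nonneg_right sqrt3 (Real.sqrt_nonneg I)
    _ = 2 * ((p:ℝ)+1) / (b-a) * Real.sqrt I := by ring
end

section
/- Markov-type L² inverse inequality in one dimension: there is a constant c > 0 such that for every p ≥ 1 and every polynomial q of degree at most p, ‖q'‖_{L²(-1,1)} ≤ c p² ‖q‖_{L²(-1,1)}. -/
open MeasureTheory

noncomputable section
namespace M19
open Polynomial intervalIntegral

def ip (f g : ℝ[X]) : ℝ := ∫ x in (-1:ℝ)..1, f.eval x * g.eval x

lemma intable (f g : ℝ[X]) : IntervalIntegrable (fun x => f.eval x * g.eval x) MeasureTheory.volume (-1:ℝ) 1 :=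
  (f.continuous.mul g.continuous).intervalIntegrable (-1) 1

lemma integral_deriv (f : ℝ[X]) :
    (∫ x in (-1:ℝ)..1, (derivative f).eval x) = f.eval 1 - f.eval (-1) := by
  refine intervalIntegral.integral_deriv_eq_sub' (fun x => f.eval x) ?_ (fun x _ => f.differentiableAt) ?_
  · funext x; exact (f.hasDerivAt x).deriv
  · exact (derivative f).continuous.continuousOn

lemma ip_parts (f g : ℝ[X]) :
    ip (derivative f) g = f.eval 1 * g.eval 1 - f.eval (-1) * g.eval (-1) - ip f (derivative g) := by
  have h := integral_deriv (f * g)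
  rw [derivative_mul] at h
  have h2 : (∫ x in (-1:ℝ)..1, (derivative f * g + f * derivative g).eval x)
      = ip (derivative f) g + ip f (derivative g) := by
    simp only [eval_add, eval_mul]
    exact intervalIntegral.integral_add (intable _ _) (intable _ _)
  rw [h2] at h
  simp only [eval_mul] at h
  linarith

lemma ip_comm (f g : ℝ[X]) : ip f g = ip g f := by
  unfold ip; simp_rw [mul_comm]

lemma ip_zero_left (g : ℝ[X]) : ip 0 g = 0 := by
  unfold ip; simp

lemma ip_C_mul_left (c : ℝ) (f g : ℝ[X]) : ip (C c * f) g = c * ip f g := by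
  unfold ip
  simp_rw [eval_mul, eval_C, mul_assoc]
  exact intervalIntegral.integral_const_mul c _

lemma ip_sum_left {s : Finset ℕ} (f : ℕ → ℝ[X]) (g : ℝ[X]) :
    ip (∑ i ∈ s, f i) g = ∑ i ∈ s, ip (f i) g := by
  unfold ip
  simp_rw [eval_finset_sum, Finset.sum_mul]
  exact intervalIntegral.integral_finset_sum (fun i _ => intable _ _)

lemma ip_self_nonneg (f : ℝ[X]) : 0 ≤ ip f f := by
  unfold ip
  apply intervalIntegral.integral_nonneg (by norm_num)
  exact fun x _ => mul_self_nonneg _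


def w (n : ℕ) : ℝ[X] := (X ^ 2 - 1) ^ n
def u (n : ℕ) : ℝ[X] := derivative^[n] (w n)

lemma w_dvd_iterate (n j : ℕ) (hj : j ≤ n) :
    ∃ Q : ℝ[X], derivative^[j] (w n) = (X ^ 2 - 1) ^ (n - j) * Q := by
  induction j with
  | zero => exact ⟨1, by simp [w]⟩
  | succ j ih =>
    obtain ⟨Q, hQ⟩ := ih (le_of_lt (Nat.lt_of_succ_le hj))
    obtain ⟨m, hm⟩ : ∃ m, n - j = m + 1 := ⟨n - (j+1), by omega⟩
    have hm2 : n - (j + 1) = m := by omega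
    refine ⟨(C ((m : ℝ) + 1)) * (2 * X * Q) + (X ^ 2 - 1) * derivative Q, ?_⟩
    rw [Function.iterate_succ_apply', hQ, hm, hm2]
    rw [derivative_mul, derivative_pow]
    simp only [derivative_sub, derivative_one, derivative_X_pow]
    push_cast
    simp only [map_ofNat]
    ring

lemma iterate_eval_one (n j : ℕ) (hj : j < n) : (derivative^[j] (w n)).eval 1 = 0 := by
  obtain ⟨Q, hQ⟩ := w_dvd_iterate n j hj.le
  have h1 : n - j ≠ 0 := by omega
  simp [hQ, zero_pow h1]

lemma iterate_eval_negone (n j : ℕ) (hj : j < n) : (derivative^[j] (w n)).eval (-1) = 0 := by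
  obtain ⟨Q, hQ⟩ := w_dvd_iterate n j hj.le
  have h1 : n - j ≠ 0 := by omega
  simp [hQ, zero_pow h1]


lemma ip_zero_right (f : ℝ[X]) : ip f 0 = 0 := by unfold ip; simp

lemma ip_step (n m : ℕ) (hm1 : 1 ≤ m) (hmn : m ≤ n) (r : ℝ[X]) :
    ip (derivative^[m] (w n)) r = - ip (derivative^[m-1] (w n)) (derivative r) := by
  have h : derivative^[m] (w n) = derivative (derivative^[m-1] (w n)) := by
    conv_lhs => rw [show m = (m-1)+1 by omega]
    rw [Function.iterate_succ_apply']
  rw [h, ip_parts]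
  rw [iterate_eval_one n (m-1) (by omega), iterate_eval_negone n (m-1) (by omega)]
  ring

lemma ip_iterate (n k : ℕ) (hk : k ≤ n) (r : ℝ[X]) :
    ip (u n) r = (-1:ℝ)^k * ip (derivative^[n-k] (w n)) (derivative^[k] r) := by
  induction k with
  | zero => simp [u]
  | succ k ih =>
    rw [ih (by omega), ip_step n (n-k) (by omega) (by omega)]
    rw [show n - k - 1 = n - (k+1) by omega, ← Function.iterate_succ_apply' derivative k r]
    ring

lemma ip_ortho (n : ℕ) (r : ℝ[X]) (hr : r.natDegree < n) : ip (u n) r = 0 := by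
  rw [ip_iterate n n le_rfl r, Nat.sub_self,
    Polynomial.iterate_derivative_eq_zero hr, ip_zero_right, mul_zero]

lemma w_natDegree (n : ℕ) : (w n).natDegree = 2 * n := by
  have h : ((X:ℝ[X]) ^ 2 - 1).natDegree = 2 := by
    simpa using Polynomial.natDegree_X_pow_sub_C (n := 2) (r := (1:ℝ))
  rw [w, Polynomial.natDegree_pow, h, mul_comm]

lemma w_coeff_top (n : ℕ) : (w n).coeff (2 * n) = 1 := by
  have hm : ((X:ℝ[X]) ^ 2 - 1).Monic := by
    simpa using Polynomial.monic_X_pow_sub_C (1:ℝ) (n := 2) (by norm_num)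
  have h2 := (hm.pow n).coeff_natDegree
  rwa [show ((X:ℝ[X])^2-1)^n = w n from rfl, w_natDegree] at h2

lemma iterate_derivative_w_self (n : ℕ) :
    derivative^[2*n] (w n) = C (((2*n).factorial : ℝ)) := by
  have hd : (derivative^[2*n] (w n)).natDegree ≤ 0 := by
    have h := Polynomial.natDegree_iterate_derivative (w n) (2*n)
    rw [w_natDegree] at h
    omega
  rw [Polynomial.eq_C_of_natDegree_le_zero hd, Polynomial.coeff_iterate_derivative,
    zero_add, w_coeff_top, Nat.descFactorial_self]
  simp



lemma w_eq (n : ℕ) : w n = (X - C 1) ^ n * (X - C (-1)) ^ n := by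
  rw [w, ← mul_pow]
  congr 1
  simp only [map_one, map_neg]
  ring

lemma u_eval_one (n : ℕ) : (u n).eval 1 = 2 ^ n * n.factorial := by
  rw [u, w_eq, Polynomial.iterate_derivative_mul, eval_finset_sum]
  rw [Finset.sum_eq_single_of_mem 0 (Finset.mem_range.mpr (Nat.succ_pos n))]
  · simp only [Nat.sub_zero, Function.iterate_zero_apply, iterate_derivative_X_sub_pow_self,
      Nat.choose_zero_right, one_smul, eval_mul, eval_natCast, eval_pow, eval_sub, eval_X, eval_C]
    norm_num
    ring
  · intro k hk hk0
    rw [iterate_derivative_X_sub_pow]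
    have h1 : n - (n - k) = k := by
      rw [Finset.mem_range] at hk; omega
    simp [h1, zero_pow hk0]

lemma u_eval_negone (n : ℕ) : (u n).eval (-1) = (-2) ^ n * n.factorial := by
  rw [u, w_eq, Polynomial.iterate_derivative_mul, eval_finset_sum]
  rw [Finset.sum_eq_single_of_mem n (Finset.mem_range.mpr (Nat.lt_succ_self n))]
  · simp only [Nat.sub_self, Function.iterate_zero_apply, iterate_derivative_X_sub_pow_self,
      Nat.choose_self, one_smul, eval_mul, eval_natCast, eval_pow, eval_sub, eval_X, eval_C]
    norm_num
  · intro k hk hkn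
    rw [iterate_derivative_X_sub_pow (c := -1)]
    have h2 : n - k ≠ 0 := by
      rw [Finset.mem_range] at hk; omega
    simp [zero_pow h2]

lemma Du_eval_one (n : ℕ) :
    (derivative (u n)).eval 1 = (n:ℝ) * (n+1).factorial * 2 ^ (n-1) := by
  have h : derivative (u n) = derivative^[n+1] (w n) := (Function.iterate_succ_apply' _ _ _).symm
  rw [h, w_eq, Polynomial.iterate_derivative_mul, eval_finset_sum]
  rw [Finset.sum_eq_single_of_mem 1 (Finset.mem_range.mpr (by omega))]
  · rw [show n + 1 - 1 = n from rfl, iterate_derivative_X_sub_pow_self,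
      iterate_derivative_X_sub_pow]
    simp only [Nat.choose_one_right, eval_smul, eval_mul, eval_natCast, eval_pow, eval_sub,
      eval_X, eval_C, smul_eq_mul, nsmul_eq_mul, Nat.descFactorial_one]
    push_cast [Nat.factorial_succ]
    norm_num
    ring
  · intro k hk hk1
    rw [iterate_derivative_X_sub_pow]
    rcases Nat.eq_zero_or_pos k with rfl | hkpos
    · simp [Nat.descFactorial_eq_zero_iff_lt.mpr (Nat.lt_succ_self n)]
    · have h1 : n - (n + 1 - k) = k - 1 ∨ n.descFactorial (n+1-k) = 0 := by
        rcases Nat.lt_or_ge n (n+1-k) with hc | hc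
        · exact Or.inr (Nat.descFactorial_eq_zero_iff_lt.mpr hc)
        · left; rw [Finset.mem_range] at hk; omega
      rcases h1 with h1 | h1
      · have h3 : k - 1 ≠ 0 := by omega
        simp [h1, zero_pow h3]
      · simp [h1]

lemma Du_eval_negone (n : ℕ) :
    (derivative (u n)).eval (-1) = (n:ℝ) * (n+1).factorial * (-2) ^ (n-1) := by
  have h : derivative (u n) = derivative^[n+1] (w n) := (Function.iterate_succ_apply' _ _ _).symm
  rw [h, w_eq, Polynomial.iterate_derivative_mul, eval_finset_sum]
  rw [Finset.sum_eq_single_of_mem n (Finset.mem_range.mpr (by omega))]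
  · rw [show n + 1 - n = 1 from by omega, iterate_derivative_X_sub_pow,
      iterate_derivative_X_sub_pow_self]
    simp only [Nat.choose_succ_self_right, eval_smul, eval_mul, eval_natCast, eval_pow, eval_sub,
      eval_X, eval_C, smul_eq_mul, nsmul_eq_mul, Nat.descFactorial_one]
    push_cast [Nat.factorial_succ]
    norm_num
    ring
  · intro k hk hkn
    rw [iterate_derivative_X_sub_pow (c := -1)]
    rcases Nat.lt_or_ge k n with hc | hc
    · have h2 : n - k ≠ 0 := by omega
      simp [zero_pow h2]
    · have hk' : k = n + 1 := by
        rw [Finset.mem_range] at hk; omega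
      subst hk'
      simp [Nat.descFactorial_eq_zero_iff_lt.mpr (Nat.lt_succ_self n)]


def J (n : ℕ) : ℝ := ∫ x in (-1:ℝ)..1, (((1 - X^2 : ℝ[X])^n).eval x)

lemma J_zero : J 0 = 2 := by
  unfold J
  simp
  norm_num

lemma J_rec (n : ℕ) : (2*(n:ℝ)+3) * J (n+1) = (2*n+2) * J n := by
  set F : ℝ[X] := X * (1 - X^2)^(n+1) with hFdef
  have hF : derivative F = C (2*(n:ℝ)+3) * (1-X^2)^(n+1) - C (2*(n:ℝ)+2) * (1-X^2)^n := by
    rw [hFdef, derivative_mul, derivative_X, derivative_pow]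
    simp only [derivative_sub, derivative_one, derivative_X_pow]
    push_cast
    simp only [map_ofNat, C_add, C_mul, C_1]
    ring
  have h0 : (∫ x in (-1:ℝ)..1, (derivative F).eval x) = 0 := by
    rw [integral_deriv F, hFdef]
    simp
  have h1 : (fun x : ℝ => (derivative F).eval x)
      = fun x => (2*(n:ℝ)+3) * (((1-X^2:ℝ[X])^(n+1)).eval x)
        - (2*(n:ℝ)+2) * (((1-X^2:ℝ[X])^n).eval x) := by
    funext x
    rw [hF]
    simp
  rw [h1] at h0
  rw [intervalIntegral.integral_sub, intervalIntegral.integral_const_mul,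
    intervalIntegral.integral_const_mul] at h0
  · unfold J; linarith
  · exact (continuous_const.mul (Polynomial.continuous _)).intervalIntegrable _ _
  · exact (continuous_const.mul (Polynomial.continuous _)).intervalIntegrable _ _

lemma J_form (n : ℕ) : (((2*n+1).factorial : ℝ)) * J n = 2 * 4^n * ((n.factorial : ℝ))^2 := by
  induction n with
  | zero => simp [J_zero]
  | succ n ih =>
    have hr := J_rec n
    have hfac : ((2*(n+1)+1).factorial : ℝ) = (2*n+3) * (2*n+2) * ((2*n+1).factorial : ℝ) := by
      have : 2*(n+1)+1 = (2*n+2)+1 := by ring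
      rw [this, Nat.factorial_succ, show (2*n+2) = (2*n+1)+1 from by ring, Nat.factorial_succ]
      push_cast
      ring
    have hfac2 : (((n+1).factorial : ℝ)) = (n+1) * (n.factorial : ℝ) := by
      rw [Nat.factorial_succ]; push_cast; ring
    rw [hfac, hfac2]
    calc (2*(n:ℝ)+3) * (2*(n:ℝ)+2) * ((2*n+1).factorial : ℝ) * J (n+1)
        = (2*(n:ℝ)+2) * ((2*n+1).factorial : ℝ) * ((2*(n:ℝ)+3) * J (n+1)) := by ring
      _ = (2*(n:ℝ)+2) * ((2*n+1).factorial : ℝ) * ((2*(n:ℝ)+2) * J n) := by rw [hr]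
      _ = (2*(n:ℝ)+2)^2 * (((2*n+1).factorial : ℝ) * J n) := by ring
      _ = (2*(n:ℝ)+2)^2 * (2 * 4^n * ((n.factorial : ℝ))^2) := by rw [ih]
      _ = 2 * 4^(n+1) * (((n:ℝ)+1) * (n.factorial : ℝ))^2 := by ring

lemma J_pos (n : ℕ) : 0 < J n := by
  have h := J_form n
  have h1 : (0:ℝ) < ((2*n+1).factorial : ℝ) := by positivity
  have h2 : (0:ℝ) < 2 * 4^n * ((n.factorial : ℝ))^2 := by positivity
  nlinarith


lemma ipN_eq (n : ℕ) : ip (u n) (u n) = ((2*n).factorial : ℝ) * J n := by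
  have h : derivative^[n] (u n) = derivative^[2*n] (w n) := by
    rw [u, ← Function.iterate_add_apply, two_mul]
  rw [ip_iterate n n le_rfl (u n), Nat.sub_self, Function.iterate_zero_apply, h,
    iterate_derivative_w_self]
  have h2 : ∀ x ∈ Set.uIcc (-1:ℝ) 1, (w n).eval x * (C (((2*n).factorial : ℝ))).eval x
      = ((-1:ℝ)^n * ((2*n).factorial : ℝ)) * ((1 - X^2 : ℝ[X])^n).eval x := by
    intro x _
    simp only [eval_C, w, eval_pow, eval_sub, eval_one, eval_X]
    rw [show (x^2 - 1 : ℝ) = -(1 - x^2) by ring, neg_pow]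
    ring
  unfold ip
  rw [intervalIntegral.integral_congr h2, intervalIntegral.integral_const_mul]
  have h3 : (-1:ℝ)^n * ((-1:ℝ)^n) = 1 := by
    rw [← pow_add, ← two_mul, pow_mul]; norm_num
  unfold J
  linear_combination (((2*n).factorial : ℝ) * (∫ x in (-1:ℝ)..1, (((1 - X^2 : ℝ[X])^n).eval x))) * h3

lemma ipD_eq (n : ℕ) :
    ip (derivative (u n)) (derivative (u n))
      = (n:ℝ) * ((n:ℝ)+1) * ((n.factorial : ℝ))^2 * 4^n := by
  rcases Nat.eq_zero_or_pos n with rfl | hn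
  · have h0 : u 0 = 1 := by simp [u, w]
    rw [h0]
    simp [ip_zero_left]
  · have hort : ip (u n) (derivative (derivative (u n))) = 0 := by
      apply ip_ortho
      have h1 : derivative (derivative (u n)) = derivative^[n+2] (w n) := by
        rw [u, ← Function.iterate_succ_apply' derivative, ← Function.iterate_succ_apply' derivative]
      calc (derivative (derivative (u n))).natDegree ≤ (w n).natDegree - (n+2) := by
            rw [h1]; exact Polynomial.natDegree_iterate_derivative _ _
        _ < n := by rw [w_natDegree]; omega
    rw [ip_parts (u n) (derivative (u n)), hort, u_eval_one, u_eval_negone, Du_eval_one,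
      Du_eval_negone]
    obtain ⟨m, rfl⟩ : ∃ m, n = m + 1 := ⟨n-1, by omega⟩
    simp only [Nat.add_sub_cancel]
    have h4 : (4:ℝ)^(m+1) = 4 * ((2:ℝ)^m * (2:ℝ)^m) := by
      rw [show (4:ℝ) = 2*2 by norm_num, mul_pow, pow_succ]; ring
    have hneg : ∀ k : ℕ, ((-2:ℝ))^k = (-1:ℝ)^k * 2^k := fun k => by
      rw [← neg_one_mul, mul_pow]
    rw [h4, hneg, hneg]
    rcases Nat.even_or_odd m with hpar | hpar
    · rw [hpar.neg_one_pow, (Even.add_one hpar).neg_one_pow]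
      push_cast [Nat.factorial_succ, pow_succ]
      ring
    · rw [hpar.neg_one_pow, (Odd.add_one hpar).neg_one_pow]
      push_cast [Nat.factorial_succ, pow_succ]
      ring

lemma ipN_pos (n : ℕ) : 0 < ip (u n) (u n) := by
  rw [ipN_eq]
  have := J_pos n
  positivity

lemma u_natDegree_le (n : ℕ) : (u n).natDegree ≤ n := by
  have h := Polynomial.natDegree_iterate_derivative (w n) n
  rw [w_natDegree] at h
  rw [u]
  omega

lemma u_coeff_self (n : ℕ) : (u n).coeff n = ((2*n).descFactorial n : ℝ) := by
  rw [u, Polynomial.coeff_iterate_derivative, show n + n = 2*n by ring, w_coeff_top]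
  simp

lemma u_coeff_self_ne (n : ℕ) : (u n).coeff n ≠ 0 := by
  rw [u_coeff_self]
  rw [Nat.cast_ne_zero]
  intro h
  rw [Nat.descFactorial_eq_zero_iff_lt] at h
  omega

lemma u_ortho (i j : ℕ) (hij : i ≠ j) : ip (u i) (u j) = 0 := by
  rcases Nat.lt_or_ge j i with h | h
  · exact ip_ortho i (u j) (lt_of_le_of_lt (u_natDegree_le j) h)
  · rw [ip_comm]
    exact ip_ortho j (u i) (lt_of_le_of_lt (u_natDegree_le i) (by omega))

lemma expand (p : ℕ) : ∀ q : ℝ[X], q.natDegree ≤ p →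
    ∃ a : ℕ → ℝ, q = ∑ n ∈ Finset.range (p+1), C (a n) * u n := by
  induction p with
  | zero =>
    intro q hq
    refine ⟨fun _ => q.coeff 0, ?_⟩
    have h0 : u 0 = 1 := by simp [u, w]
    rw [Finset.sum_range_one, h0, mul_one]
    exact Polynomial.eq_C_of_natDegree_le_zero hq
  | succ p ih =>
    intro q hq
    set d : ℝ := q.coeff (p+1) / ((u (p+1)).coeff (p+1)) with hd
    have hco : (q - C d * u (p+1)).coeff (p+1) = 0 := by
      rw [Polynomial.coeff_sub, Polynomial.coeff_C_mul, hd,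
        div_mul_cancel₀ _ (u_coeff_self_ne (p+1)), sub_self]
    have hdeg : (q - C d * u (p+1)).natDegree ≤ p := by
      rw [Polynomial.natDegree_le_iff_coeff_eq_zero]
      intro N hN
      rcases Nat.lt_or_ge (p+1) N with h1 | h1
      · rw [Polynomial.coeff_sub, Polynomial.coeff_C_mul,
          Polynomial.coeff_eq_zero_of_natDegree_lt (lt_of_le_of_lt hq h1),
          Polynomial.coeff_eq_zero_of_natDegree_lt (lt_of_le_of_lt (u_natDegree_le (p+1)) h1)]
        ring
      · have : N = p + 1 := by omega
        rw [this]; exact hco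
    obtain ⟨a, ha⟩ := ih _ hdeg
    refine ⟨Function.update a (p+1) d, ?_⟩
    rw [Finset.sum_range_succ, Function.update_self]
    have hsum : ∑ n ∈ Finset.range (p+1), C (Function.update a (p+1) d n) * u n
        = ∑ n ∈ Finset.range (p+1), C (a n) * u n := by
      refine Finset.sum_congr rfl (fun n hn => ?_)
      rw [Finset.mem_range] at hn
      rw [Function.update_of_ne (by omega)]
    rw [hsum, ← ha]
    ring

lemma ip_add_left (f g h : ℝ[X]) : ip (f + g) h = ip f h + ip g h := by
  unfold ip
  simp_rw [eval_add, add_mul]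
  exact intervalIntegral.integral_add (intable _ _) (intable _ _)

lemma parseval (p : ℕ) (a : ℕ → ℝ) :
    ip (∑ n ∈ Finset.range (p+1), C (a n) * u n) (∑ n ∈ Finset.range (p+1), C (a n) * u n)
      = ∑ n ∈ Finset.range (p+1), (a n)^2 * ip (u n) (u n) := by
  rw [ip_sum_left]
  refine Finset.sum_congr rfl (fun i hi => ?_)
  rw [ip_C_mul_left, ip_comm, ip_sum_left]
  rw [Finset.sum_eq_single_of_mem i hi]
  · rw [ip_C_mul_left, ip_comm]
    ring
  · intro j _ hj
    rw [ip_C_mul_left, ip_comm, u_ortho i j (fun h => hj h.symm)]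
    ring

lemma ip_add_right (f g h : ℝ[X]) : ip f (g + h) = ip f g + ip f h := by
  rw [ip_comm, ip_add_left, ip_comm g f, ip_comm h f]

lemma ip_C_mul_right (c : ℝ) (f g : ℝ[X]) : ip f (C c * g) = c * ip f g := by
  rw [ip_comm, ip_C_mul_left, ip_comm g f]

lemma ip_sq_le (f g : ℝ[X]) : (ip f g)^2 ≤ ip f f * ip g g := by
  have key : ∀ t : ℝ, 0 ≤ ip g g * (t*t) + (2 * ip f g) * t + ip f f := by
    intro t
    have h := ip_self_nonneg (f + C t * g)
    have hexp : ip (f + C t * g) (f + C t * g)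
        = ip g g * (t*t) + (2 * ip f g) * t + ip f f := by
      simp only [ip_add_left, ip_add_right, ip_C_mul_left, ip_C_mul_right, ip_comm g f]
      ring
    rw [hexp] at h
    exact h
  have hd := discrim_le_zero key
  rw [discrim] at hd
  nlinarith

lemma ip_le_sqrt (f g : ℝ[X]) :
    ip f g ≤ Real.sqrt (ip f f) * Real.sqrt (ip g g) := by
  have h1 : ip f g ≤ |ip f g| := le_abs_self _
  have h2 : |ip f g| = Real.sqrt ((ip f g)^2) := (Real.sqrt_sq_eq_abs _).symm
  rw [← Real.sqrt_mul (ip_self_nonneg f)]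
  calc ip f g ≤ Real.sqrt ((ip f g)^2) := by rw [← h2]; exact h1
    _ ≤ Real.sqrt (ip f f * ip g g) := Real.sqrt_le_sqrt (ip_sq_le f g)

lemma sqrt_ip_add (f g : ℝ[X]) :
    Real.sqrt (ip (f + g) (f + g)) ≤ Real.sqrt (ip f f) + Real.sqrt (ip g g) := by
  have hexp : ip (f+g) (f+g) = ip f f + 2 * ip f g + ip g g := by
    rw [ip_add_left, ip_comm f (f+g), ip_comm g (f+g), ip_add_left, ip_add_left,
      ip_comm g f]
    ring
  have h1 : ip (f+g) (f+g) ≤ (Real.sqrt (ip f f) + Real.sqrt (ip g g))^2 := by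
    rw [hexp]
    have hfg := ip_le_sqrt f g
    have hf := Real.sq_sqrt (ip_self_nonneg f)
    have hg := Real.sq_sqrt (ip_self_nonneg g)
    nlinarith
  calc Real.sqrt (ip (f+g) (f+g)) ≤ Real.sqrt ((Real.sqrt (ip f f) + Real.sqrt (ip g g))^2) :=
        Real.sqrt_le_sqrt h1
    _ = Real.sqrt (ip f f) + Real.sqrt (ip g g) := by
        rw [Real.sqrt_sq (by positivity)]

lemma sqrt_ip_sum (s : Finset ℕ) (f : ℕ → ℝ[X]) :
    Real.sqrt (ip (∑ i ∈ s, f i) (∑ i ∈ s, f i)) ≤ ∑ i ∈ s, Real.sqrt (ip (f i) (f i)) := by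
  induction s using Finset.cons_induction with
  | empty => simp [ip_zero_left]
  | cons i s his ih =>
    rw [Finset.sum_cons, Finset.sum_cons]
    calc Real.sqrt (ip (f i + ∑ j ∈ s, f j) (f i + ∑ j ∈ s, f j))
        ≤ Real.sqrt (ip (f i) (f i)) + Real.sqrt (ip (∑ j ∈ s, f j) (∑ j ∈ s, f j)) :=
          sqrt_ip_add _ _
      _ ≤ Real.sqrt (ip (f i) (f i)) + ∑ j ∈ s, Real.sqrt (ip (f j) (f j)) := by linarith

lemma ip_C_mul_self (c : ℝ) (f : ℝ[X]) : ip (C c * f) (C c * f) = c^2 * ip f f := by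
  rw [ip_C_mul_left, ip_comm, ip_C_mul_left, ip_comm]
  ring

lemma ratio_bound (n p : ℕ) (hn : n ≤ p) (hp : 1 ≤ p) :
    ip (derivative (u n)) (derivative (u n)) ≤ 3 * (p:ℝ)^3 * ip (u n) (u n) := by
  rw [ipD_eq, ipN_eq]
  have hJ : ((2*n).factorial : ℝ) * J n = 2 * 4^n * ((n.factorial : ℝ))^2 / (2*(n:ℝ)+1) := by
    have h1 := J_form n
    have h2 : ((2*n+1).factorial : ℝ) = (2*(n:ℝ)+1) * ((2*n).factorial : ℝ) := by
      rw [Nat.factorial_succ]; push_cast; ring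
    rw [h2] at h1
    have h3 : (2*(n:ℝ)+1) ≠ 0 := by positivity
    field_simp
    nlinarith [h1]
  have hfac : (0:ℝ) < ((n.factorial : ℝ))^2 * 4^n := by positivity
  have hnum : (n:ℝ) * ((n:ℝ)+1) * (2*(n:ℝ)+1) ≤ 6 * (p:ℝ)^3 := by
    have hnp : (n:ℝ) ≤ p := by exact_mod_cast hn
    have hp1 : (1:ℝ) ≤ p := by exact_mod_cast hp
    have hn0 : (0:ℝ) ≤ n := Nat.cast_nonneg n
    have step1 : (n:ℝ)*((n:ℝ)+1)*(2*(n:ℝ)+1) ≤ (p:ℝ)*((p:ℝ)+1)*(2*(p:ℝ)+1) := by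
      gcongr <;> linarith
    nlinarith [step1, hp1, sq_nonneg ((p:ℝ)-1), mul_pos (lt_of_lt_of_le one_pos hp1) (lt_of_lt_of_le one_pos hp1)]
  have hpos : (0:ℝ) < 2*(n:ℝ)+1 := by positivity
  rw [hJ]
  have hre : 3*(p:ℝ)^3 * (2*4^n*((n.factorial:ℝ))^2/(2*(n:ℝ)+1))
      = 6*(p:ℝ)^3*(((n.factorial:ℝ))^2*4^n)/(2*(n:ℝ)+1) := by ring
  rw [hre, le_div_iff₀ hpos]
  nlinarith [mul_le_mul_of_nonneg_right hnum hfac.le]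

end M19

theorem stmt_19 :
    ∃ c > 0, ∀ (p : ℕ), 1 ≤ p → ∀ q : Polynomial ℝ, q.natDegree ≤ p →
      Real.sqrt (∫ x in (-1:ℝ)..1, (q.derivative.eval x)^2)
        ≤ c * (p : ℝ)^2 * Real.sqrt (∫ x in (-1:ℝ)..1, (q.eval x)^2) := by
  refine ⟨3, by norm_num, ?_⟩
  intro p hp q hq
  obtain ⟨a, ha⟩ := M19.expand p q hq
  have hL : (∫ x in (-1:ℝ)..1, (q.derivative.eval x)^2) = M19.ip q.derivative q.derivative := by
    unfold M19.ip; simp_rw [sq]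
  have hR : (∫ x in (-1:ℝ)..1, (q.eval x)^2) = M19.ip q q := by
    unfold M19.ip; simp_rw [sq]
  rw [hL, hR]
  have hd : q.derivative
      = ∑ n ∈ Finset.range (p+1), Polynomial.C (a n) * Polynomial.derivative (M19.u n) := by
    conv_lhs => rw [ha]
    rw [Polynomial.derivative_sum]
    refine Finset.sum_congr rfl (fun n _ => ?_)
    rw [Polynomial.derivative_mul, Polynomial.derivative_C]
    ring
  set A : ℕ → ℝ := fun n => Real.sqrt (M19.ip (M19.u n) (M19.u n)) with hA
  set B : ℕ → ℝ := fun n =>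
    Real.sqrt (M19.ip (Polynomial.derivative (M19.u n)) (Polynomial.derivative (M19.u n))) with hB
  have step1 : Real.sqrt (M19.ip q.derivative q.derivative)
      ≤ ∑ n ∈ Finset.range (p+1), |a n| * B n := by
    rw [hd]
    refine le_trans (M19.sqrt_ip_sum _ _) ?_
    refine Finset.sum_le_sum (fun n _ => ?_)
    rw [M19.ip_C_mul_self, Real.sqrt_mul (sq_nonneg _), Real.sqrt_sq_eq_abs]
  have hBA : ∀ n ∈ Finset.range (p+1), B n ≤ Real.sqrt (3*(p:ℝ)^3) * A n := by
    intro n hn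
    rw [Finset.mem_range] at hn
    have h1 := M19.ratio_bound n p (by omega) hp
    have h2 : B n ≤ Real.sqrt (3*(p:ℝ)^3 * M19.ip (M19.u n) (M19.u n)) := Real.sqrt_le_sqrt h1
    rwa [Real.sqrt_mul (by positivity)] at h2
  have step2 : ∑ n ∈ Finset.range (p+1), |a n| * B n
      ≤ Real.sqrt (3*(p:ℝ)^3) * ∑ n ∈ Finset.range (p+1), |a n| * A n := by
    rw [Finset.mul_sum]
    refine Finset.sum_le_sum (fun n hn => ?_)
    calc |a n| * B n ≤ |a n| * (Real.sqrt (3*(p:ℝ)^3) * A n) :=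
          mul_le_mul_of_nonneg_left (hBA n hn) (abs_nonneg _)
      _ = Real.sqrt (3*(p:ℝ)^3) * (|a n| * A n) := by ring
  have e1 : ∑ n ∈ Finset.range (p+1), (|a n| * A n)^2 = M19.ip q q := by
    have : ∀ n ∈ Finset.range (p+1), (|a n| * A n)^2 = (a n)^2 * M19.ip (M19.u n) (M19.u n) := by
      intro n _
      rw [mul_pow, sq_abs, hA]
      rw [Real.sq_sqrt (M19.ip_self_nonneg _)]
    rw [Finset.sum_congr rfl this, ← M19.parseval p a, ← ha]
  have step3 : ∑ n ∈ Finset.range (p+1), |a n| * A n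
      ≤ Real.sqrt ((p:ℝ)+1) * Real.sqrt (M19.ip q q) := by
    have hcs := Finset.sum_mul_sq_le_sq_mul_sq (Finset.range (p+1))
      (fun n => |a n| * A n) (fun _ => (1:ℝ))
    simp only [mul_one, one_pow] at hcs
    rw [e1, Finset.sum_const, Finset.card_range, nsmul_eq_mul] at hcs
    have hnn : 0 ≤ ∑ n ∈ Finset.range (p+1), |a n| * A n := by
      refine Finset.sum_nonneg (fun n _ => ?_)
      exact mul_nonneg (abs_nonneg _) (Real.sqrt_nonneg _)
    calc ∑ n ∈ Finset.range (p+1), |a n| * A n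
        = Real.sqrt ((∑ n ∈ Finset.range (p+1), |a n| * A n)^2) := (Real.sqrt_sq hnn).symm
      _ ≤ Real.sqrt (M19.ip q q * ((p:ℝ)+1)) := by
          apply Real.sqrt_le_sqrt
          calc (∑ n ∈ Finset.range (p+1), |a n| * A n)^2
              ≤ M19.ip q q * (((p+1 : ℕ):ℝ) * 1) := hcs
            _ = M19.ip q q * ((p:ℝ)+1) := by push_cast; ring
      _ = Real.sqrt ((p:ℝ)+1) * Real.sqrt (M19.ip q q) := by
          rw [Real.sqrt_mul (M19.ip_self_nonneg q)]
          ring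
  have hfinal : Real.sqrt (3*(p:ℝ)^3) * (Real.sqrt ((p:ℝ)+1)) ≤ 3 * (p:ℝ)^2 := by
    have hp1 : (1:ℝ) ≤ p := by exact_mod_cast hp
    rw [← Real.sqrt_mul (by positivity)]
    have h9 : 3*(p:ℝ)^3 * ((p:ℝ)+1) ≤ (3*(p:ℝ)^2)^2 := by nlinarith
    calc Real.sqrt (3*(p:ℝ)^3 * ((p:ℝ)+1)) ≤ Real.sqrt ((3*(p:ℝ)^2)^2) := Real.sqrt_le_sqrt h9
      _ = 3*(p:ℝ)^2 := Real.sqrt_sq (by positivity)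
  calc Real.sqrt (M19.ip q.derivative q.derivative)
      ≤ ∑ n ∈ Finset.range (p+1), |a n| * B n := step1
    _ ≤ Real.sqrt (3*(p:ℝ)^3) * ∑ n ∈ Finset.range (p+1), |a n| * A n := step2
    _ ≤ Real.sqrt (3*(p:ℝ)^3) * (Real.sqrt ((p:ℝ)+1) * Real.sqrt (M19.ip q q)) := by
        exact mul_le_mul_of_nonneg_left step3 (Real.sqrt_nonneg _)
    _ = (Real.sqrt (3*(p:ℝ)^3) * Real.sqrt ((p:ℝ)+1)) * Real.sqrt (M19.ip q q) := by ring
    _ ≤ 3 * (p:ℝ)^2 * Real.sqrt (M19.ip q q) :=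
        mul_le_mul_of_nonneg_right hfinal (Real.sqrt_nonneg _)
end
end
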